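/- arXiv:2605.19396 — 12 statements merged into one kernel-verified Lean document; each statement's English description precedes it below -/
import Mathlib

section
/- Let W be an N×N real symmetric doubly stochastic matrix with ρ := ‖W − J‖₂, and let f₁,…,f_N : ℝ^d → ℝ be differentiable with L₁-Lipschitz gradients. Let X = (x₁,…,x_N) and X' = (x₁',…,x_N') be stacked vectors in (ℝ^d)^N, let G̃ = (g̃₁,…,g̃_N) be a stacked vector in (ℝ^d)^N, and let Δ be the stacked vector with blocks Δᵢ := ∇fᵢ(xᵢ') − ∇fᵢ(xᵢ). Then for every integer m ≥ 1, D((Wᵐ ⊗ I_d)(G̃ + Δ)) ≤ ρᵐ·(D(G̃) + (L₁/√N)·‖X' − X‖), where ‖X' − X‖ := (∑ᵢ‖xᵢ' − xᵢ‖²)^{1/2}. -/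
open scoped BigOperators

/-- RMS dispersion of a stacked vector `Z = (z₁,…,z_N)`. -/
noncomputable def disp {N d : ℕ} (Z : Fin N → EuclideanSpace ℝ (Fin d)) : ℝ :=
  Real.sqrt ((N : ℝ)⁻¹ * ∑ i, ‖Z i - (N : ℝ)⁻¹ • ∑ j, Z j‖ ^ 2)

/-- The stacked vector `(A ⊗ I_d)Z` with `i`-th block `∑ⱼ Aᵢⱼ zⱼ`. -/
noncomputable def mix {N d : ℕ} (A : Matrix (Fin N) (Fin N) ℝ)
    (Z : Fin N → EuclideanSpace ℝ (Fin d)) : Fin N → EuclideanSpace ℝ (Fin d) :=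
  fun i => ∑ j, A i j • Z j

/-- Stacked Euclidean norm `‖S‖ = sqrt(∑ᵢ ‖sᵢ‖²)`. -/
noncomputable def stackNorm {N d : ℕ} (S : Fin N → EuclideanSpace ℝ (Fin d)) : ℝ :=
  Real.sqrt (∑ i, ‖S i‖ ^ 2)

/-- centering operator -/
noncomputable def ctr {N d : ℕ} (Z : Fin N → EuclideanSpace ℝ (Fin d)) :
    Fin N → EuclideanSpace ℝ (Fin d) :=
  fun i => Z i - (N : ℝ)⁻¹ • ∑ j, Z j

lemma stackNorm_nonneg {N d : ℕ} (S : Fin N → EuclideanSpace ℝ (Fin d)) :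
    0 ≤ stackNorm S := Real.sqrt_nonneg _

lemma disp_eq_ctr {N d : ℕ} (Z : Fin N → EuclideanSpace ℝ (Fin d)) :
    disp Z = Real.sqrt (N : ℝ)⁻¹ * stackNorm (ctr Z) := by
  rw [disp, stackNorm, ← Real.sqrt_mul (by positivity)]
  rfl

lemma euclid_sum_apply {N d : ℕ} (Z : Fin N → EuclideanSpace ℝ (Fin d))
    (a : Fin N → ℝ) (k : Fin d) :
    (∑ j, a j • Z j) k = ∑ j, a j * Z j k := by
  induction (Finset.univ : Finset (Fin N)) using Finset.cons_induction with
  | empty => rfl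
  | cons i s hi ih => rw [Finset.sum_cons, Finset.sum_cons, ← ih]; rfl

lemma euclid_norm_sq {d : ℕ} (v : EuclideanSpace ℝ (Fin d)) :
    ‖v‖ ^ 2 = ∑ k, (v k) ^ 2 := by
  rw [EuclideanSpace.norm_eq, Real.sq_sqrt (by positivity)]
  simp [sq_abs]

lemma stackNorm_mix_le {N d : ℕ} (A : Matrix (Fin N) (Fin N) ℝ)
    (Z : Fin N → EuclideanSpace ℝ (Fin d)) :
    stackNorm (mix A Z) ≤ ‖Matrix.toEuclideanCLM (𝕜 := ℝ) A‖ * stackNorm Z := by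
  set c := ‖Matrix.toEuclideanCLM (𝕜 := ℝ) A‖ with hc
  have hc0 : 0 ≤ c := norm_nonneg _
  have key : ∑ i, ‖mix A Z i‖ ^ 2 ≤ c ^ 2 * ∑ j, ‖Z j‖ ^ 2 := by
    have h1 : ∑ i, ‖mix A Z i‖ ^ 2 = ∑ k, ∑ i, (mix A Z i k) ^ 2 := by
      rw [Finset.sum_comm]
      exact Finset.sum_congr rfl fun i _ => euclid_norm_sq _
    have h2 : c ^ 2 * ∑ j, ‖Z j‖ ^ 2 = ∑ k, c ^ 2 * ∑ j, (Z j k) ^ 2 := by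
      rw [← Finset.mul_sum, Finset.sum_comm]
      congr 1
      exact Finset.sum_congr rfl fun j _ => euclid_norm_sq _
    rw [h1, h2]
    apply Finset.sum_le_sum
    intro k _
    set v : EuclideanSpace ℝ (Fin N) := WithLp.toLp 2 (fun j => Z j k) with hv
    have happ : ∀ i, mix A Z i k = (Matrix.toEuclideanCLM (𝕜 := ℝ) A v) i := by
      intro i
      have : (Matrix.toEuclideanCLM (𝕜 := ℝ) A v) i = ∑ j, A i j * v j := rfl
      rw [this, mix, euclid_sum_apply]
    calc ∑ i, (mix A Z i k) ^ 2
        = ‖Matrix.toEuclideanCLM (𝕜 := ℝ) A v‖ ^ 2 := by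
          rw [euclid_norm_sq]
          exact Finset.sum_congr rfl fun i _ => by rw [happ]
      _ ≤ (c * ‖v‖) ^ 2 := by
          have := (Matrix.toEuclideanCLM (𝕜 := ℝ) A).le_opNorm v
          exact pow_le_pow_left₀ (norm_nonneg _) this 2
      _ = c ^ 2 * ∑ j, (Z j k) ^ 2 := by
          rw [mul_pow, euclid_norm_sq]
  calc stackNorm (mix A Z) = Real.sqrt (∑ i, ‖mix A Z i‖ ^ 2) := rfl
    _ ≤ Real.sqrt (c ^ 2 * ∑ j, ‖Z j‖ ^ 2) := Real.sqrt_le_sqrt key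
    _ = c * stackNorm Z := by
        rw [Real.sqrt_mul (by positivity), Real.sqrt_sq hc0, stackNorm]

lemma stackNorm_add_le {N d : ℕ} (S T : Fin N → EuclideanSpace ℝ (Fin d)) :
    stackNorm (S + T) ≤ stackNorm S + stackNorm T := by
  set u : EuclideanSpace ℝ (Fin N) := WithLp.toLp 2 (fun i => ‖S i‖) with hu
  set v : EuclideanSpace ℝ (Fin N) := WithLp.toLp 2 (fun i => ‖T i‖) with hv
  have hnu : stackNorm S = ‖u‖ := by
    rw [stackNorm, EuclideanSpace.norm_eq]; simp [hu, sq_abs]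
  have hnv : stackNorm T = ‖v‖ := by
    rw [stackNorm, EuclideanSpace.norm_eq]; simp [hv, sq_abs]
  have h1 : stackNorm (S + T) ≤ ‖u + v‖ := by
    rw [stackNorm, EuclideanSpace.norm_eq]
    apply Real.sqrt_le_sqrt
    apply Finset.sum_le_sum
    intro i _
    have : (u + v) i = ‖S i‖ + ‖T i‖ := rfl
    rw [this]
    have h2 : ‖(S + T) i‖ ≤ ‖S i‖ + ‖T i‖ := norm_add_le _ _
    calc ‖(S + T) i‖ ^ 2 ≤ (‖S i‖ + ‖T i‖) ^ 2 :=
          pow_le_pow_left₀ (norm_nonneg _) h2 2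
      _ = ‖‖S i‖ + ‖T i‖‖ ^ 2 := by
          rw [Real.norm_of_nonneg (by positivity)]
  calc stackNorm (S + T) ≤ ‖u + v‖ := h1
    _ ≤ ‖u‖ + ‖v‖ := norm_add_le _ _
    _ = stackNorm S + stackNorm T := by rw [hnu, hnv]

lemma stackNorm_ctr_le {N d : ℕ} (Z : Fin N → EuclideanSpace ℝ (Fin d)) :
    stackNorm (ctr Z) ≤ stackNorm Z := by
  rw [stackNorm, stackNorm]
  apply Real.sqrt_le_sqrt
  set c : EuclideanSpace ℝ (Fin d) := (N : ℝ)⁻¹ • ∑ j, Z j with hcdef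
  have hexp : ∀ i, ‖ctr Z i‖ ^ 2 = ‖Z i‖ ^ 2 - 2 * inner ℝ (Z i) c + ‖c‖ ^ 2 := by
    intro i
    rw [ctr]
    exact norm_sub_sq_real (Z i) c
  rw [Finset.sum_congr rfl fun i _ => hexp i]
  rw [Finset.sum_add_distrib, Finset.sum_sub_distrib]
  have hsum : (∑ i, inner ℝ (Z i) c : ℝ) = inner ℝ (∑ i, Z i) c := by
    rw [sum_inner]
  have hZc : (∑ i, Z i : EuclideanSpace ℝ (Fin d)) = (N : ℝ) • c := by
    by_cases hN : (N : ℝ) = 0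
    · have : N = 0 := by exact_mod_cast hN
      subst this
      simp [hcdef]
    · rw [hcdef, smul_smul, mul_inv_cancel₀ hN, one_smul]
  have h2 : (∑ i, inner ℝ (Z i) c : ℝ) = (N : ℝ) * ‖c‖ ^ 2 := by
    rw [hsum, hZc, real_inner_smul_left, real_inner_self_eq_norm_sq]
  rw [← Finset.mul_sum, h2]
  simp only [Finset.sum_const, Finset.card_univ, Fintype.card_fin, nsmul_eq_mul]
  nlinarith [sq_nonneg ‖c‖, Nat.cast_nonneg (α := ℝ) N]

lemma stackNorm_lip {N d : ℕ} (L : ℝ) (S T : Fin N → EuclideanSpace ℝ (Fin d))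
    (h : ∀ i, ‖S i‖ ≤ L * ‖T i‖) :
    stackNorm S ≤ L * stackNorm T := by
  by_cases hT : ∀ i, T i = 0
  · have hS : ∀ i, S i = 0 := by
      intro i
      have := h i
      rw [hT i, norm_zero, mul_zero] at this
      exact norm_le_zero_iff.mp this
    have h1 : stackNorm S = 0 := by simp [stackNorm, hS]
    have h2 : stackNorm T = 0 := by simp [stackNorm, hT]
    rw [h1, h2, mul_zero]
  · push_neg at hT
    obtain ⟨i₀, hi₀⟩ := hT
    have hL : 0 ≤ L := by
      have h1 := h i₀
      have h2 : 0 < ‖T i₀‖ := norm_pos_iff.mpr hi₀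
      nlinarith [norm_nonneg (S i₀)]
    rw [stackNorm, stackNorm]
    have key : ∑ i, ‖S i‖ ^ 2 ≤ L ^ 2 * ∑ i, ‖T i‖ ^ 2 := by
      rw [Finset.mul_sum]
      apply Finset.sum_le_sum
      intro i _
      have := h i
      nlinarith [norm_nonneg (S i), norm_nonneg (T i)]
    calc Real.sqrt (∑ i, ‖S i‖ ^ 2) ≤ Real.sqrt (L ^ 2 * ∑ i, ‖T i‖ ^ 2) :=
          Real.sqrt_le_sqrt key
      _ = L * Real.sqrt (∑ i, ‖T i‖ ^ 2) := by
          rw [Real.sqrt_mul (by positivity), Real.sqrt_sq hL]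

lemma disp_add_le {N d : ℕ} (S T : Fin N → EuclideanSpace ℝ (Fin d)) :
    disp (S + T) ≤ disp S + disp T := by
  have hctr : ctr (S + T) = ctr S + ctr T := by
    funext i
    simp only [ctr, Pi.add_apply, Finset.sum_add_distrib, smul_add]
    abel
  rw [disp_eq_ctr, disp_eq_ctr, disp_eq_ctr, hctr, ← mul_add]
  exact mul_le_mul_of_nonneg_left (stackNorm_add_le _ _) (Real.sqrt_nonneg _)

lemma pow_row_sum {N : ℕ} (W : Matrix (Fin N) (Fin N) ℝ)
    (hrow : ∀ i, ∑ j, W i j = 1) (m : ℕ) (i : Fin N) :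
    ∑ j, (W ^ m) i j = 1 := by
  induction m with
  | zero => simp [Matrix.one_apply, Finset.sum_ite_eq]
  | succ n ih =>
    rw [pow_succ]
    simp only [Matrix.mul_apply]
    rw [Finset.sum_comm]
    calc ∑ k, ∑ j, (W ^ n) i k * W k j
        = ∑ k, (W ^ n) i k * ∑ j, W k j := by
          exact Finset.sum_congr rfl fun k _ => (Finset.mul_sum _ _ _).symm
      _ = ∑ k, (W ^ n) i k := by
          exact Finset.sum_congr rfl fun k _ => by rw [hrow k, mul_one]
      _ = 1 := ih

lemma pow_col_sum {N : ℕ} (W : Matrix (Fin N) (Fin N) ℝ)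
    (hcol : ∀ j, ∑ i, W i j = 1) (m : ℕ) (j : Fin N) :
    ∑ i, (W ^ m) i j = 1 := by
  induction m generalizing j with
  | zero => simp [Matrix.one_apply, Finset.sum_ite_eq']
  | succ n ih =>
    rw [pow_succ]
    simp only [Matrix.mul_apply]
    rw [Finset.sum_comm]
    calc ∑ k, ∑ i, (W ^ n) i k * W k j
        = ∑ k, (∑ i, (W ^ n) i k) * W k j := by
          exact Finset.sum_congr rfl fun k _ => (Finset.sum_mul _ _ _).symm
      _ = ∑ k, W k j := by
          exact Finset.sum_congr rfl fun k _ => by rw [ih k, one_mul]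
      _ = 1 := hcol j

section Main

variable {N d : ℕ}

theorem stmt4' (hN : 0 < N)
    (W : Matrix (Fin N) (Fin N) ℝ)
    (hrow : ∀ i, ∑ j, W i j = 1)
    (hcol : ∀ j, ∑ i, W i j = 1)
    (J : Matrix (Fin N) (Fin N) ℝ)
    (hJ : J = (N : ℝ)⁻¹ • Matrix.of (fun _ _ => (1 : ℝ)))
    (ρ : ℝ) (hρ : ρ = ‖Matrix.toEuclideanCLM (𝕜 := ℝ) (W - J)‖)
    (L₁ : ℝ)
    (Δ G X X' : Fin N → EuclideanSpace ℝ (Fin d))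
    (hΔ : ∀ i, ‖Δ i‖ ≤ L₁ * ‖(X' - X) i‖)
    (m : ℕ) (hm : 1 ≤ m) :
    disp (mix (W ^ m) (G + Δ))
      ≤ ρ ^ m * (disp G + (L₁ / Real.sqrt N) * stackNorm (X' - X)) := by
  have hNne : (N : ℝ) ≠ 0 := Nat.cast_ne_zero.mpr hN.ne'
  have hJentry : ∀ i j, J i j = (N : ℝ)⁻¹ := by intro i j; simp [hJ]
  -- matrix identities
  have hAJ : ∀ (A : Matrix (Fin N) (Fin N) ℝ), (∀ i, ∑ j, A i j = 1) → A * J = J := by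
    intro A hA
    ext i j
    rw [Matrix.mul_apply, hJentry i j]
    calc ∑ k, A i k * J k j = ∑ k, A i k * (N : ℝ)⁻¹ := by
          exact Finset.sum_congr rfl fun k _ => by rw [hJentry]
      _ = (∑ k, A i k) * (N : ℝ)⁻¹ := (Finset.sum_mul _ _ _).symm
      _ = (N : ℝ)⁻¹ := by rw [hA i, one_mul]
  have hJA : ∀ (A : Matrix (Fin N) (Fin N) ℝ), (∀ j, ∑ i, A i j = 1) → J * A = J := by
    intro A hA
    ext i j
    rw [Matrix.mul_apply, hJentry i j]
    calc ∑ k, J i k * A k j = ∑ k, (N : ℝ)⁻¹ * A k j := by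
          exact Finset.sum_congr rfl fun k _ => by rw [hJentry]
      _ = (N : ℝ)⁻¹ * ∑ k, A k j := (Finset.mul_sum _ _ _).symm
      _ = (N : ℝ)⁻¹ := by rw [hA j, mul_one]
  have hJJ : J * J = J := by
    apply hAJ
    intro i
    simp [hJentry, Finset.sum_const, mul_inv_cancel₀ hNne]
  have hWJ : W * J = J := hAJ W hrow
  have hJW : J * W = J := hJA W hcol
  have hpowJ : ∀ n : ℕ, (W ^ n) * J = J := fun n => hAJ _ (pow_row_sum W hrow n)
  have hpow : ∀ n : ℕ, 1 ≤ n → (W - J) ^ n = W ^ n - J := by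
    intro n hn
    induction n with
    | zero => omega
    | succ k ih =>
      by_cases hk : 1 ≤ k
      · rw [pow_succ, ih hk, pow_succ, Matrix.sub_mul, Matrix.mul_sub, Matrix.mul_sub,
          hpowJ k, hJW, hJJ]
        abel
      · have : k = 0 := by omega
        subst this
        simp
  -- centering identities
  set Z := G + Δ with hZ
  have h1 : ctr (mix (W ^ m) Z) = mix (W ^ m - J) Z := by
    funext i
    have hsum : (∑ i', mix (W ^ m) Z i') = ∑ j, Z j := by
      rw [show (∑ i', mix (W ^ m) Z i') = ∑ i', ∑ j, (W ^ m) i' j • Z j from rfl,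
        Finset.sum_comm]
      apply Finset.sum_congr rfl
      intro j _
      rw [← Finset.sum_smul, pow_col_sum W hcol m j, one_smul]
    rw [ctr, hsum]
    show mix (W ^ m) Z i - (N : ℝ)⁻¹ • ∑ j, Z j = ∑ j, ((W ^ m) i j - J i j) • Z j
    calc mix (W ^ m) Z i - (N : ℝ)⁻¹ • ∑ j, Z j
        = ∑ j, (W ^ m) i j • Z j - ∑ j, J i j • Z j := by
          rw [Finset.smul_sum]
          congr 1
          exact Finset.sum_congr rfl fun j _ => by rw [hJentry]
      _ = ∑ j, ((W ^ m) i j - J i j) • Z j := by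
          rw [← Finset.sum_sub_distrib]
          exact Finset.sum_congr rfl fun j _ => (sub_smul _ _ _).symm
  have hrowsum0 : ∀ i, ∑ j, ((W ^ m) i j - J i j) = 0 := by
    intro i
    rw [Finset.sum_sub_distrib, pow_row_sum W hrow m i]
    have : ∑ j, J i j = 1 := by
      simp [hJentry, Finset.sum_const, mul_inv_cancel₀ hNne]
    rw [this, sub_self]
  have h2 : mix (W ^ m - J) Z = mix (W ^ m - J) (ctr Z) := by
    funext i
    show (∑ j, ((W ^ m) i j - J i j) • Z j) =
      ∑ j, ((W ^ m) i j - J i j) • (Z j - (N : ℝ)⁻¹ • ∑ l, Z l)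
    rw [Finset.sum_congr rfl fun j _ => smul_sub ((W ^ m) i j - J i j) (Z j) _,
      Finset.sum_sub_distrib, ← Finset.sum_smul, hrowsum0 i, zero_smul, sub_zero]
  -- norm bound
  have hρ0 : 0 ≤ ρ := hρ ▸ norm_nonneg _
  have hnormpow : ‖Matrix.toEuclideanCLM (𝕜 := ℝ) (W ^ m - J)‖ ≤ ρ ^ m := by
    rw [← hpow m hm, map_pow, hρ]
    exact norm_pow_le' _ (by omega)
  have hsqrt : Real.sqrt (N : ℝ)⁻¹ = (Real.sqrt N)⁻¹ := Real.sqrt_inv _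
  have hsqrtpos : 0 ≤ Real.sqrt (N : ℝ)⁻¹ := Real.sqrt_nonneg _
  calc disp (mix (W ^ m) Z)
      = Real.sqrt (N : ℝ)⁻¹ * stackNorm (mix (W ^ m - J) (ctr Z)) := by
        rw [disp_eq_ctr, h1, h2]
    _ ≤ Real.sqrt (N : ℝ)⁻¹ * (ρ ^ m * stackNorm (ctr Z)) := by
        apply mul_le_mul_of_nonneg_left _ hsqrtpos
        calc stackNorm (mix (W ^ m - J) (ctr Z))
            ≤ ‖Matrix.toEuclideanCLM (𝕜 := ℝ) (W ^ m - J)‖ * stackNorm (ctr Z) :=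
              stackNorm_mix_le _ _
          _ ≤ ρ ^ m * stackNorm (ctr Z) :=
              mul_le_mul_of_nonneg_right hnormpow (stackNorm_nonneg _)
    _ = ρ ^ m * disp Z := by rw [disp_eq_ctr]; ring
    _ ≤ ρ ^ m * (disp G + (L₁ / Real.sqrt N) * stackNorm (X' - X)) := by
        apply mul_le_mul_of_nonneg_left _ (pow_nonneg hρ0 m)
        calc disp Z ≤ disp G + disp Δ := disp_add_le G Δ
          _ ≤ disp G + (L₁ / Real.sqrt N) * stackNorm (X' - X) := by
              apply add_le_add_right
              calc disp Δ = Real.sqrt (N : ℝ)⁻¹ * stackNorm (ctr Δ) := disp_eq_ctr Δ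
                _ ≤ Real.sqrt (N : ℝ)⁻¹ * stackNorm Δ :=
                    mul_le_mul_of_nonneg_left (stackNorm_ctr_le Δ) hsqrtpos
                _ ≤ Real.sqrt (N : ℝ)⁻¹ * (L₁ * stackNorm (X' - X)) :=
                    mul_le_mul_of_nonneg_left (stackNorm_lip L₁ Δ (X' - X) hΔ) hsqrtpos
                _ = (L₁ / Real.sqrt N) * stackNorm (X' - X) := by
                    rw [hsqrt]; ring

end Main

/-- gradient-tracker dispersion recursion:
with `Δᵢ = ∇fᵢ(xᵢ') − ∇fᵢ(xᵢ)`,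
`D((Wᵐ ⊗ I_d)(G̃ + Δ)) ≤ ρᵐ·(D(G̃) + (L₁/√N)·‖X' − X‖)`. -/
theorem stmt4 {N d : ℕ} (hN : 0 < N)
    (W : Matrix (Fin N) (Fin N) ℝ)
    (hsymm : W.IsSymm)
    (hnonneg : ∀ i j, 0 ≤ W i j)
    (hrow : ∀ i, ∑ j, W i j = 1)
    (hcol : ∀ j, ∑ i, W i j = 1)
    (J : Matrix (Fin N) (Fin N) ℝ)
    (hJ : J = (N : ℝ)⁻¹ • Matrix.of (fun _ _ => (1 : ℝ)))
    (ρ : ℝ) (hρ : ρ = ‖Matrix.toEuclideanCLM (𝕜 := ℝ) (W - J)‖)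
    (L₁ : ℝ) (f : Fin N → EuclideanSpace ℝ (Fin d) → ℝ)
    (hdiff : ∀ i, Differentiable ℝ (f i))
    (hLip : ∀ i, ∀ x y : EuclideanSpace ℝ (Fin d),
      ‖gradient (f i) x - gradient (f i) y‖ ≤ L₁ * ‖x - y‖)
    (X X' G : Fin N → EuclideanSpace ℝ (Fin d))
    (m : ℕ) (hm : 1 ≤ m) :
    disp (mix (W ^ m) (G + fun i => gradient (f i) (X' i) - gradient (f i) (X i)))
      ≤ ρ ^ m * (disp G + (L₁ / Real.sqrt N) * stackNorm (X' - X)) := by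
  exact stmt4' hN W hrow hcol J hJ ρ hρ L₁
    (fun i => gradient (f i) (X' i) - gradient (f i) (X i)) G X X'
    (fun i => hLip i (X' i) (X i)) m hm
end

section
/- Let W be an N×N real symmetric doubly stochastic matrix with ρ := ‖W − J‖₂, and let f₁,…,f_N : ℝ^d → ℝ be twice continuously differentiable with L₂-Lipschitz Hessians (in spectral norm). Let X = (x₁,…,x_N) and X' = (x₁',…,x_N') be stacked vectors in (ℝ^d)^N, let H̃ = (H̃₁,…,H̃_N) be a stacked family of d×d matrices whose blocks are measured in Frobenius norm, and let Δ have blocks Δᵢ := ∇²fᵢ(xᵢ') − ∇²fᵢ(xᵢ). Then for every integer m ≥ 1, D((Wᵐ ⊗ I_{d²})(H̃ + Δ)) ≤ ρᵐ·(D(H̃) + (√d·L₂/√N)·‖X' − X‖), where D applied to stacked matrices uses the Frobenius norm of each block and ‖X' − X‖ := (∑ᵢ‖xᵢ' − xᵢ‖²)^{1/2}. -/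
open scoped BigOperators

/-- Squared Frobenius norm of a real matrix. -/
noncomputable def frobSq {d : ℕ} (A : Matrix (Fin d) (Fin d) ℝ) : ℝ :=
  ∑ a, ∑ b, (A a b) ^ 2

/-- RMS dispersion of a stacked family of `d×d` matrices,
each block measured in Frobenius norm. -/
noncomputable def dispM {N d : ℕ} (Z : Fin N → Matrix (Fin d) (Fin d) ℝ) : ℝ :=
  Real.sqrt ((N : ℝ)⁻¹ * ∑ i, frobSq (Z i - (N : ℝ)⁻¹ • ∑ j, Z j))

/-- The stacked family `(A ⊗ I_{d²})Z` with `i`-th block `∑ⱼ Aᵢⱼ zⱼ`. -/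
noncomputable def mixM {N d : ℕ} (A : Matrix (Fin N) (Fin N) ℝ)
    (Z : Fin N → Matrix (Fin d) (Fin d) ℝ) : Fin N → Matrix (Fin d) (Fin d) ℝ :=
  fun i => ∑ j, A i j • Z j

/-- The Hessian of `f : ℝ^d → ℝ` at `x`, as a `d×d` matrix. -/
noncomputable def hessMatrix {d : ℕ} (f : EuclideanSpace ℝ (Fin d) → ℝ)
    (x : EuclideanSpace ℝ (Fin d)) : Matrix (Fin d) (Fin d) ℝ :=
  Matrix.of fun a b => (fderiv ℝ (gradient f) x (EuclideanSpace.single b 1)) a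

/-! ### Auxiliary lemmas -/

section Aux

lemma var_le {N : ℕ} (u : Fin N → ℝ) :
    ∑ i, (u i - (N:ℝ)⁻¹ * ∑ j, u j)^2 ≤ ∑ i, (u i)^2 := by
  rcases Nat.eq_zero_or_pos N with h | h
  · subst h; simp
  set s := ∑ j, u j with hs
  set μ := (N:ℝ)⁻¹ * s with hμ
  have hNμ : (N:ℝ) * μ = s := by
    rw [hμ, ← mul_assoc, mul_inv_cancel₀ (by positivity), one_mul]
  have h1 : ∑ i, ((u i)^2 - (u i - μ)^2) = ∑ i, (2*μ*u i - μ^2) :=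
    Finset.sum_congr rfl fun i _ => by ring
  have h2 : ∑ i, (2*μ*(u i) - μ^2) = 2*μ*s - (N:ℝ)*μ^2 := by
    rw [Finset.sum_sub_distrib, ← Finset.mul_sum, Finset.sum_const, Finset.card_univ,
      Fintype.card_fin, nsmul_eq_mul, ← hs]
  have hNμ2 : (N:ℝ)*μ^2 = μ*s := by rw [pow_two, ← mul_assoc, hNμ]; ring
  have h4 : 0 ≤ μ * s := by
    have : μ * s = (N:ℝ)⁻¹ * s^2 := by rw [hμ]; ring
    rw [this]; positivity
  have h5 : ∑ i, ((u i)^2 - (u i - μ)^2) = ∑ i, (u i)^2 - ∑ i, (u i - μ)^2 :=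
    Finset.sum_sub_distrib _ _
  linarith [h1.trans h2]

variable {N : ℕ} (hN : 0 < N)

lemma colsum_pow (W : Matrix (Fin N) (Fin N) ℝ) (hcol : ∀ j, ∑ i, W i j = 1) (m : ℕ) :
    ∀ j, ∑ i, (W^m) i j = 1 := by
  induction m with
  | zero => intro j; simp [Matrix.one_apply]
  | succ k ih =>
    intro j
    rw [pow_succ]
    simp only [Matrix.mul_apply]
    rw [Finset.sum_comm]
    calc ∑ k', ∑ i, (W^k) i k' * W k' j = ∑ k', (∑ i, (W^k) i k') * W k' j := by
          simp [Finset.sum_mul]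
      _ = ∑ k', W k' j := by simp [ih]
      _ = 1 := hcol j

lemma rowsum_pow (W : Matrix (Fin N) (Fin N) ℝ) (hrow : ∀ i, ∑ j, W i j = 1) (m : ℕ) :
    ∀ i, ∑ j, (W^m) i j = 1 := by
  induction m with
  | zero => intro i; simp [Matrix.one_apply]
  | succ k ih =>
    intro i
    rw [pow_succ]
    simp only [Matrix.mul_apply]
    rw [Finset.sum_comm]
    calc ∑ k', ∑ j, (W^k) i k' * W k' j = ∑ k', (W^k) i k' * ∑ j, W k' j := by
          simp [Finset.mul_sum]
      _ = ∑ k', (W^k) i k' := by simp [hrow]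
      _ = 1 := ih i

variable (J : Matrix (Fin N) (Fin N) ℝ) (hJ : J = (N : ℝ)⁻¹ • Matrix.of (fun _ _ => (1 : ℝ)))

include hJ in
lemma J_apply : ∀ i j, J i j = (N:ℝ)⁻¹ := by intro i j; rw [hJ]; simp

omit hN in
include hJ in
lemma mul_J (A : Matrix (Fin N) (Fin N) ℝ) (hrowA : ∀ i, ∑ j, A i j = 1) : A * J = J := by
  ext i j
  rw [Matrix.mul_apply]
  simp only [J_apply J hJ]
  rw [← Finset.sum_mul, hrowA, one_mul]

omit hN in
include hJ in
lemma J_mul (A : Matrix (Fin N) (Fin N) ℝ) (hcolA : ∀ j, ∑ i, A i j = 1) : J * A = J := by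
  ext i j
  rw [Matrix.mul_apply]
  simp only [J_apply J hJ]
  rw [← Finset.mul_sum, hcolA, mul_one]

include hN hJ in
lemma pow_sub_J (W : Matrix (Fin N) (Fin N) ℝ)
    (hrow : ∀ i, ∑ j, W i j = 1) (hcol : ∀ j, ∑ i, W i j = 1) (k : ℕ) :
    W^(k+1) - J = (W - J)^(k+1) := by
  have hJJ : J * J = J := by
    apply mul_J J hJ
    intro i
    simp only [J_apply J hJ]
    rw [Finset.sum_const, Finset.card_univ, Fintype.card_fin, nsmul_eq_mul,
      mul_inv_cancel₀ (by positivity)]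
  induction k with
  | zero => simp
  | succ k ih =>
    have h1 : (W - J)^(k+2) = (W - J)^(k+1) * (W - J) := by rw [pow_succ]
    rw [h1, ← ih]
    have hWkJ : W^(k+1) * J = J := mul_J J hJ _ (rowsum_pow W hrow (k+1))
    have hJW : J * W = J := J_mul J hJ W hcol
    rw [Matrix.sub_mul, Matrix.mul_sub, Matrix.mul_sub, hWkJ, hJW, hJJ, pow_succ]
    abel

include hN hJ in
lemma rowsum_M (W : Matrix (Fin N) (Fin N) ℝ)
    (hrow : ∀ i, ∑ j, W i j = 1) (k : ℕ) :
    ∀ i, ∑ j, ((W - J)^(k+1)) i j = 0 := by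
  have base : ∀ i, ∑ j, (W - J) i j = 0 := by
    intro i
    simp only [Matrix.sub_apply, Finset.sum_sub_distrib, J_apply J hJ]
    rw [hrow, Finset.sum_const, Finset.card_univ, Fintype.card_fin, nsmul_eq_mul,
      mul_inv_cancel₀ (by positivity)]
    ring
  induction k with
  | zero => simpa using base
  | succ k ih =>
    intro i
    rw [pow_succ]
    simp only [Matrix.mul_apply]
    rw [Finset.sum_comm]
    calc ∑ l, ∑ j, ((W-J)^(k+1)) i l * (W-J) l j
        = ∑ l, ((W-J)^(k+1)) i l * ∑ j, (W-J) l j :=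
          Finset.sum_congr rfl fun l _ => by rw [Finset.mul_sum]
      _ = 0 := by simp only [base]; simp

include hN hJ in
lemma colsum_M (W : Matrix (Fin N) (Fin N) ℝ)
    (hcol : ∀ j, ∑ i, W i j = 1) (k : ℕ) :
    ∀ j, ∑ i, ((W - J)^(k+1)) i j = 0 := by
  have base : ∀ j, ∑ i, (W - J) i j = 0 := by
    intro j
    simp only [Matrix.sub_apply, Finset.sum_sub_distrib, J_apply J hJ]
    rw [hcol, Finset.sum_const, Finset.card_univ, Fintype.card_fin, nsmul_eq_mul,
      mul_inv_cancel₀ (by positivity)]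
    ring
  induction k with
  | zero => simpa using base
  | succ k ih =>
    intro j
    rw [pow_succ']
    simp only [Matrix.mul_apply]
    rw [Finset.sum_comm]
    calc ∑ l, ∑ i, (W-J) i l * ((W-J)^(k+1)) l j
        = ∑ l, (∑ i, (W-J) i l) * ((W-J)^(k+1)) l j :=
          Finset.sum_congr rfl fun l _ => by rw [Finset.sum_mul]
      _ = 0 := by simp only [base]; simp

end Aux

section Disp

lemma frobSq_nonneg {d : ℕ} (A : Matrix (Fin d) (Fin d) ℝ) : 0 ≤ frobSq A :=
  Finset.sum_nonneg fun _ _ => Finset.sum_nonneg fun _ _ => sq_nonneg _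

/-- Embedding of stacked matrices into a Euclidean space. -/
noncomputable def embM {N d : ℕ} (Z : Fin N → Matrix (Fin d) (Fin d) ℝ) :
    EuclideanSpace ℝ (Fin N × Fin d × Fin d) :=
  (WithLp.equiv 2 _).symm (fun p => Z p.1 p.2.1 p.2.2)

lemma embM_add {N d : ℕ} (A B : Fin N → Matrix (Fin d) (Fin d) ℝ) :
    embM (A + B) = embM A + embM B := rfl

lemma norm_embM {N d : ℕ} (Z : Fin N → Matrix (Fin d) (Fin d) ℝ) :
    ‖embM Z‖ = Real.sqrt (∑ i, frobSq (Z i)) := by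
  rw [EuclideanSpace.norm_eq]
  congr 1
  rw [Fintype.sum_prod_type]
  refine Finset.sum_congr rfl fun i _ => ?_
  rw [Fintype.sum_prod_type]
  refine Finset.sum_congr rfl fun a _ => Finset.sum_congr rfl fun b _ => ?_
  rw [Real.norm_eq_abs, sq_abs]
  rfl

lemma sqrt_frobSq_add_le {N d : ℕ} (A B : Fin N → Matrix (Fin d) (Fin d) ℝ) :
    Real.sqrt (∑ i, frobSq ((A + B) i)) ≤
      Real.sqrt (∑ i, frobSq (A i)) + Real.sqrt (∑ i, frobSq (B i)) := by
  rw [← norm_embM, ← norm_embM, ← norm_embM, embM_add]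
  exact norm_add_le _ _

lemma dispM_eq {N d : ℕ} (Z : Fin N → Matrix (Fin d) (Fin d) ℝ) :
    dispM Z = Real.sqrt ((N:ℝ)⁻¹) *
      Real.sqrt (∑ i, frobSq (Z i - (N : ℝ)⁻¹ • ∑ j, Z j)) := by
  rw [dispM, Real.sqrt_mul (by positivity)]

lemma dispM_add_le {N d : ℕ} (A B : Fin N → Matrix (Fin d) (Fin d) ℝ) :
    dispM (A + B) ≤ dispM A + dispM B := by
  have hc : (fun i => (A + B) i - (N : ℝ)⁻¹ • ∑ j, (A + B) j)
      = (fun i => A i - (N : ℝ)⁻¹ • ∑ j, A j) + (fun i => B i - (N : ℝ)⁻¹ • ∑ j, B j) := by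
    funext i
    show (A i + B i) - (N : ℝ)⁻¹ • ∑ j, (A j + B j) = _
    rw [Finset.sum_add_distrib, smul_add]
    show _ = (A i - (N : ℝ)⁻¹ • ∑ j, A j) + (B i - (N : ℝ)⁻¹ • ∑ j, B j)
    abel
  rw [dispM_eq, dispM_eq, dispM_eq]
  have h1 : ∑ i, frobSq ((A + B) i - (N : ℝ)⁻¹ • ∑ j, (A + B) j)
      = ∑ i, frobSq (((fun i => A i - (N : ℝ)⁻¹ • ∑ j, A j)
          + fun i => B i - (N : ℝ)⁻¹ • ∑ j, B j) i) := by
    rw [← hc]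
  rw [h1]
  calc Real.sqrt ((N:ℝ)⁻¹) * Real.sqrt (∑ i, frobSq (((fun i => A i - (N : ℝ)⁻¹ • ∑ j, A j)
          + fun i => B i - (N : ℝ)⁻¹ • ∑ j, B j) i))
      ≤ Real.sqrt ((N:ℝ)⁻¹) * (Real.sqrt (∑ i, frobSq (A i - (N : ℝ)⁻¹ • ∑ j, A j))
          + Real.sqrt (∑ i, frobSq (B i - (N : ℝ)⁻¹ • ∑ j, B j))) :=
        mul_le_mul_of_nonneg_left (sqrt_frobSq_add_le _ _) (Real.sqrt_nonneg _)
    _ = _ := by ring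

lemma dispM_le_rms {N d : ℕ} (Z : Fin N → Matrix (Fin d) (Fin d) ℝ) :
    dispM Z ≤ Real.sqrt ((N:ℝ)⁻¹ * ∑ i, frobSq (Z i)) := by
  apply Real.sqrt_le_sqrt
  apply mul_le_mul_of_nonneg_left _ (by positivity)
  have key : ∀ i, frobSq (Z i - (N : ℝ)⁻¹ • ∑ j, Z j)
      = ∑ a, ∑ b, (Z i a b - (N:ℝ)⁻¹ * ∑ j, Z j a b)^2 := by
    intro i
    unfold frobSq
    refine Finset.sum_congr rfl fun a _ => Finset.sum_congr rfl fun b _ => ?_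
    congr 1
    simp [Matrix.sub_apply, Matrix.smul_apply, Matrix.sum_apply]
  have swap : ∀ (g : Fin N → Fin d → Fin d → ℝ),
      ∑ i, ∑ a, ∑ b, g i a b = ∑ a, ∑ b, ∑ i, g i a b := by
    intro g
    rw [Finset.sum_comm]
    exact Finset.sum_congr rfl fun a _ => Finset.sum_comm
  calc ∑ i, frobSq (Z i - (N : ℝ)⁻¹ • ∑ j, Z j)
      = ∑ a, ∑ b, ∑ i, (Z i a b - (N:ℝ)⁻¹ * ∑ j, Z j a b)^2 := by
        simp only [key]; exact swap _
    _ ≤ ∑ a, ∑ b, ∑ i, (Z i a b)^2 :=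
        Finset.sum_le_sum fun a _ => Finset.sum_le_sum fun b _ => var_le _
    _ = ∑ i, frobSq (Z i) := by unfold frobSq; exact (swap _).symm

lemma eunorm_sq {n : ℕ} (x : EuclideanSpace ℝ (Fin n)) : ‖x‖^2 = ∑ i, (x i)^2 := by
  rw [EuclideanSpace.norm_eq, Real.sq_sqrt (by positivity)]
  exact Finset.sum_congr rfl fun i _ => by rw [Real.norm_eq_abs, sq_abs]

lemma mulVec_sq_le {N : ℕ} (M : Matrix (Fin N) (Fin N) ℝ) (u : Fin N → ℝ) :
    ∑ i, (M.mulVec u i)^2 ≤ ‖Matrix.toEuclideanCLM (𝕜 := ℝ) M‖^2 * ∑ i, (u i)^2 := by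
  set v : EuclideanSpace ℝ (Fin N) := (WithLp.equiv 2 _).symm u with hv
  have h1 : Matrix.toEuclideanCLM (𝕜 := ℝ) M v = (WithLp.equiv 2 _).symm (M.mulVec u) := by
    rw [hv]; exact Matrix.toEuclideanCLM_toLp M u
  have h2 : ‖Matrix.toEuclideanCLM (𝕜 := ℝ) M v‖ ≤ ‖Matrix.toEuclideanCLM (𝕜 := ℝ) M‖ * ‖v‖ :=
    (Matrix.toEuclideanCLM (𝕜 := ℝ) M).le_opNorm v
  have h3 := pow_le_pow_left₀ (norm_nonneg _) h2 2
  rw [h1, eunorm_sq, mul_pow, eunorm_sq] at h3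
  exact h3

lemma sum_swap3 {N d : ℕ} (g : Fin N → Fin d → Fin d → ℝ) :
    ∑ i, ∑ a, ∑ b, g i a b = ∑ a, ∑ b, ∑ i, g i a b := by
  rw [Finset.sum_comm]
  exact Finset.sum_congr rfl fun a _ => Finset.sum_comm

lemma dispM_mix_le {N d : ℕ} (hN : 0 < N)
    (B M : Matrix (Fin N) (Fin N) ℝ) (r : ℝ) (hr : 0 ≤ r)
    (hBM : ∀ i j, B i j = M i j + (N:ℝ)⁻¹)
    (hMrow : ∀ i, ∑ j, M i j = 0)
    (hMcol : ∀ j, ∑ i, M i j = 0)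
    (hM : ‖Matrix.toEuclideanCLM (𝕜 := ℝ) M‖ ≤ r)
    (Z : Fin N → Matrix (Fin d) (Fin d) ℝ) :
    dispM (mixM B Z) ≤ r * dispM Z := by
  have hNne : (N:ℝ) ≠ 0 := by positivity
  set c : Matrix (Fin d) (Fin d) ℝ := (N:ℝ)⁻¹ • ∑ j, Z j with hcdef
  set Y : Fin N → Matrix (Fin d) (Fin d) ℝ := fun i => Z i - c with hY
  have hcolB : ∀ j, ∑ i, B i j = 1 := by
    intro j
    simp only [hBM]
    rw [Finset.sum_add_distrib, hMcol, Finset.sum_const, Finset.card_univ, Fintype.card_fin,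
      nsmul_eq_mul, mul_inv_cancel₀ hNne, zero_add]
  have hsum_mix : ∑ i, mixM B Z i = ∑ j, Z j := by
    unfold mixM
    rw [Finset.sum_comm]
    calc ∑ j, ∑ i, B i j • Z j = ∑ j, (∑ i, B i j) • Z j :=
          Finset.sum_congr rfl fun j _ => by rw [Finset.sum_smul]
      _ = ∑ j, Z j := Finset.sum_congr rfl fun j _ => by rw [hcolB, one_smul]
  have hcenter : ∀ i, mixM B Z i - (N:ℝ)⁻¹ • ∑ j, mixM B Z j = ∑ j, M i j • Y j := by
    intro i
    rw [hsum_mix, ← hcdef]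
    show ∑ j, B i j • Z j - c = _
    have e1 : ∑ j, B i j • Z j = ∑ j, M i j • Z j + c := by
      calc ∑ j, B i j • Z j = ∑ j, (M i j • Z j + (N:ℝ)⁻¹ • Z j) :=
            Finset.sum_congr rfl fun j _ => by rw [hBM, add_smul]
        _ = ∑ j, M i j • Z j + (N:ℝ)⁻¹ • ∑ j, Z j := by
            rw [Finset.sum_add_distrib, Finset.smul_sum]
        _ = ∑ j, M i j • Z j + c := by rw [← hcdef]
    have e2 : ∑ j, M i j • Y j = ∑ j, M i j • Z j - (∑ j, M i j) • c := by
      rw [Finset.sum_smul, ← Finset.sum_sub_distrib]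
      exact Finset.sum_congr rfl fun j _ => by rw [hY]; rw [smul_sub]
    rw [e1, e2, hMrow i, zero_smul, sub_zero]
    abel
  have entry : ∀ i (a b : Fin d), (∑ j, M i j • Y j) a b = M.mulVec (fun j => Y j a b) i := by
    intro i a b
    simp [Matrix.sum_apply, Matrix.mulVec, dotProduct]
  have hM2 : ‖Matrix.toEuclideanCLM (𝕜 := ℝ) M‖^2 ≤ r^2 :=
    pow_le_pow_left₀ (norm_nonneg _) hM 2
  have key : ∑ i, frobSq (∑ j, M i j • Y j) ≤ r^2 * ∑ i, frobSq (Y i) := by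
    unfold frobSq
    simp only [entry]
    calc ∑ i, ∑ a, ∑ b, (M.mulVec (fun j => Y j a b) i)^2
        = ∑ a, ∑ b, ∑ i, (M.mulVec (fun j => Y j a b) i)^2 := sum_swap3 _
      _ ≤ ∑ a, ∑ b, r^2 * ∑ j, (Y j a b)^2 := by
          refine Finset.sum_le_sum fun a _ => Finset.sum_le_sum fun b _ => ?_
          exact (mulVec_sq_le M _).trans
            (mul_le_mul_of_nonneg_right hM2 (Finset.sum_nonneg fun _ _ => sq_nonneg _))
      _ = r^2 * ∑ a, ∑ b, ∑ j, (Y j a b)^2 := by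
          rw [Finset.mul_sum]
          exact Finset.sum_congr rfl fun a _ => by rw [Finset.mul_sum]
      _ = r^2 * ∑ j, ∑ a, ∑ b, (Y j a b)^2 := by rw [sum_swap3]
  have goal2 : dispM (mixM B Z) ≤ Real.sqrt (r^2 * ((N:ℝ)⁻¹ * ∑ i, frobSq (Y i))) := by
    unfold dispM
    apply Real.sqrt_le_sqrt
    have heq : ∑ i, frobSq (mixM B Z i - (N:ℝ)⁻¹ • ∑ j, mixM B Z j)
        = ∑ i, frobSq (∑ j, M i j • Y j) :=
      Finset.sum_congr rfl fun i _ => by rw [hcenter]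
    rw [heq]
    calc (N:ℝ)⁻¹ * ∑ i, frobSq (∑ j, M i j • Y j)
        ≤ (N:ℝ)⁻¹ * (r^2 * ∑ i, frobSq (Y i)) :=
          mul_le_mul_of_nonneg_left key (by positivity)
      _ = r^2 * ((N:ℝ)⁻¹ * ∑ i, frobSq (Y i)) := by ring
  calc dispM (mixM B Z) ≤ Real.sqrt (r^2 * ((N:ℝ)⁻¹ * ∑ i, frobSq (Y i))) := goal2
    _ = r * Real.sqrt ((N:ℝ)⁻¹ * ∑ i, frobSq (Y i)) := by
        rw [Real.sqrt_mul (sq_nonneg r), Real.sqrt_sq hr]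
    _ = r * dispM Z := by rw [dispM]

lemma frob_hess_diff_le {d : ℕ} (L₂ : ℝ) (f : EuclideanSpace ℝ (Fin d) → ℝ)
    (hLip : ∀ x y : EuclideanSpace ℝ (Fin d),
      ‖fderiv ℝ (gradient f) x - fderiv ℝ (gradient f) y‖ ≤ L₂ * ‖x - y‖)
    (x y : EuclideanSpace ℝ (Fin d)) :
    frobSq (hessMatrix f x - hessMatrix f y) ≤ (d:ℝ) * (L₂ * ‖x - y‖)^2 := by
  set T := fderiv ℝ (gradient f) x - fderiv ℝ (gradient f) y with hT
  have hTe : ∀ a b : Fin d, (hessMatrix f x - hessMatrix f y) a b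
      = (T (EuclideanSpace.single b 1)) a := by
    intro a b
    simp [hessMatrix, Matrix.sub_apply, hT, ContinuousLinearMap.sub_apply, PiLp.sub_apply]
  have hTb : ∀ b : Fin d, ‖T (EuclideanSpace.single b 1)‖ ≤ L₂ * ‖x - y‖ := by
    intro b
    calc ‖T (EuclideanSpace.single b 1)‖ ≤ ‖T‖ * ‖EuclideanSpace.single b (1:ℝ)‖ :=
          T.le_opNorm _
      _ = ‖T‖ := by rw [EuclideanSpace.norm_single, norm_one, mul_one]
      _ ≤ L₂ * ‖x - y‖ := hLip x y
  unfold frobSq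
  calc ∑ a, ∑ b, ((hessMatrix f x - hessMatrix f y) a b)^2
      = ∑ b, ∑ a, ((T (EuclideanSpace.single b 1)) a)^2 := by
        simp only [hTe]; exact Finset.sum_comm
    _ = ∑ b : Fin d, ‖T (EuclideanSpace.single b 1)‖^2 :=
        Finset.sum_congr rfl fun b _ => (eunorm_sq _).symm
    _ ≤ ∑ b : Fin d, (L₂ * ‖x - y‖)^2 :=
        Finset.sum_le_sum fun b _ => pow_le_pow_left₀ (norm_nonneg _) (hTb b) 2
    _ = (d:ℝ) * (L₂ * ‖x - y‖)^2 := by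
        rw [Finset.sum_const, Finset.card_univ, Fintype.card_fin, nsmul_eq_mul]

lemma disp_delta {N d : ℕ} (hN : 0 < N) (L₂ : ℝ) (hL : 0 ≤ L₂)
    (f : Fin N → EuclideanSpace ℝ (Fin d) → ℝ)
    (hLip : ∀ i, ∀ x y : EuclideanSpace ℝ (Fin d),
      ‖fderiv ℝ (gradient (f i)) x - fderiv ℝ (gradient (f i)) y‖ ≤ L₂ * ‖x - y‖)
    (X X' : Fin N → EuclideanSpace ℝ (Fin d)) :
    dispM (fun i => hessMatrix (f i) (X' i) - hessMatrix (f i) (X i))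
      ≤ (Real.sqrt d * L₂ / Real.sqrt N) * stackNorm (X' - X) := by
  set S := ∑ i, ‖X' i - X i‖^2 with hS
  have hS0 : 0 ≤ S := Finset.sum_nonneg fun _ _ => sq_nonneg _
  have hsum : ∑ i, frobSq (hessMatrix (f i) (X' i) - hessMatrix (f i) (X i))
      ≤ (d:ℝ) * (L₂^2 * S) := by
    calc ∑ i, frobSq (hessMatrix (f i) (X' i) - hessMatrix (f i) (X i))
        ≤ ∑ i, (d:ℝ) * (L₂ * ‖X' i - X i‖)^2 :=
          Finset.sum_le_sum fun i _ => frob_hess_diff_le L₂ (f i) (hLip i) (X' i) (X i)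
      _ = (d:ℝ) * (L₂^2 * S) := by
          rw [hS, Finset.mul_sum, Finset.mul_sum]
          exact Finset.sum_congr rfl fun i _ => by ring
  have hstack : stackNorm (X' - X) = Real.sqrt S := by
    unfold stackNorm
    congr 1
  have hrhs : (Real.sqrt d * L₂ / Real.sqrt N) * stackNorm (X' - X)
      = Real.sqrt ((N:ℝ)⁻¹ * ((d:ℝ) * (L₂^2 * S))) := by
    rw [hstack]
    rw [show (N:ℝ)⁻¹ * ((d:ℝ) * (L₂^2 * S)) = (Real.sqrt d * L₂ / Real.sqrt N * Real.sqrt S)^2 by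
      have e : (Real.sqrt d * L₂ / Real.sqrt N * Real.sqrt S)^2
          = (Real.sqrt d)^2 * L₂^2 * (Real.sqrt S)^2 / (Real.sqrt N)^2 := by ring
      rw [e, Real.sq_sqrt (Nat.cast_nonneg d), Real.sq_sqrt (Nat.cast_nonneg N),
        Real.sq_sqrt hS0, div_eq_mul_inv]
      ring]
    rw [Real.sqrt_sq (by positivity)]
  rw [hrhs]
  exact (dispM_le_rms _).trans (Real.sqrt_le_sqrt
    (mul_le_mul_of_nonneg_left hsum (by positivity)))

end Disp

/-- Hessian-tracker dispersion recursion: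
with `Δᵢ = ∇²fᵢ(xᵢ') − ∇²fᵢ(xᵢ)` (blocks in Frobenius norm),
`D((Wᵐ ⊗ I_{d²})(H̃ + Δ)) ≤ ρᵐ·(D(H̃) + (√d·L₂/√N)·‖X' − X‖)`. -/
theorem stmt5 {N d : ℕ} (hN : 0 < N)
    (W : Matrix (Fin N) (Fin N) ℝ)
    (hsymm : W.IsSymm)
    (hnonneg : ∀ i j, 0 ≤ W i j)
    (hrow : ∀ i, ∑ j, W i j = 1)
    (hcol : ∀ j, ∑ i, W i j = 1)
    (J : Matrix (Fin N) (Fin N) ℝ)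
    (hJ : J = (N : ℝ)⁻¹ • Matrix.of (fun _ _ => (1 : ℝ)))
    (ρ : ℝ) (hρ : ρ = ‖Matrix.toEuclideanCLM (𝕜 := ℝ) (W - J)‖)
    (L₂ : ℝ) (f : Fin N → EuclideanSpace ℝ (Fin d) → ℝ)
    (hC2 : ∀ i, ContDiff ℝ 2 (f i))
    (hLip : ∀ i, ∀ x y : EuclideanSpace ℝ (Fin d),
      ‖fderiv ℝ (gradient (f i)) x - fderiv ℝ (gradient (f i)) y‖ ≤ L₂ * ‖x - y‖)
    (X X' : Fin N → EuclideanSpace ℝ (Fin d))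
    (H : Fin N → Matrix (Fin d) (Fin d) ℝ)
    (m : ℕ) (hm : 1 ≤ m) :
    dispM (mixM (W ^ m) (H + fun i => hessMatrix (f i) (X' i) - hessMatrix (f i) (X i)))
      ≤ ρ ^ m * (dispM H + (Real.sqrt d * L₂ / Real.sqrt N) * stackNorm (X' - X)) := by
  obtain ⟨k, rfl⟩ : ∃ k, m = k + 1 := ⟨m - 1, (Nat.succ_pred_eq_of_pos hm).symm⟩
  have hρ0 : 0 ≤ ρ := hρ ▸ norm_nonneg _
  have hrpow : 0 ≤ ρ^(k+1) := pow_nonneg hρ0 _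
  have hMrow := rowsum_M hN J hJ W hrow k
  have hMcol := colsum_M hN J hJ W hcol k
  have hBM : ∀ i j, (W^(k+1)) i j = ((W-J)^(k+1)) i j + (N:ℝ)⁻¹ := by
    intro i j
    have h1 := pow_sub_J hN J hJ W hrow hcol k
    have h2 : (W^(k+1)) i j - J i j = ((W-J)^(k+1)) i j := by
      rw [← h1, Matrix.sub_apply]
    rw [J_apply J hJ] at h2
    linarith
  have hnorm : ‖Matrix.toEuclideanCLM (𝕜 := ℝ) ((W-J)^(k+1))‖ ≤ ρ^(k+1) := by
    rw [map_pow, hρ]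
    exact norm_pow_le' _ (Nat.succ_pos k)
  have step1 : dispM (mixM (W^(k+1))
        (H + fun i => hessMatrix (f i) (X' i) - hessMatrix (f i) (X i)))
      ≤ ρ^(k+1) * dispM (H + fun i => hessMatrix (f i) (X' i) - hessMatrix (f i) (X i)) :=
    dispM_mix_le hN _ _ _ hrpow hBM hMrow hMcol hnorm _
  have step2 : dispM (H + fun i => hessMatrix (f i) (X' i) - hessMatrix (f i) (X i))
      ≤ dispM H + (Real.sqrt d * L₂ / Real.sqrt N) * stackNorm (X' - X) := by
    by_cases hL : 0 ≤ L₂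
    · exact (dispM_add_le H _).trans
        (add_le_add_right (disp_delta hN L₂ hL f hLip X X') _)
    · push_neg at hL
      have hXX : X' = X := by
        funext i
        have h1 := hLip i (X' i) (X i)
        have h2 : (0:ℝ) ≤ L₂ * ‖X' i - X i‖ := le_trans (norm_nonneg _) h1
        have h3 : ‖X' i - X i‖ = 0 := by
          by_contra hne
          have : 0 < ‖X' i - X i‖ := lt_of_le_of_ne (norm_nonneg _) (Ne.symm hne)
          nlinarith
        have := norm_eq_zero.mp h3
        exact sub_eq_zero.mp this
      subst hXX
      have hΔ0 : (fun i => hessMatrix (f i) (X' i) - hessMatrix (f i) (X' i))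
          = (fun _ => (0 : Matrix (Fin d) (Fin d) ℝ)) := by
        funext i; exact sub_self _
      have hstack0 : stackNorm (X' - X') = 0 := by
        unfold stackNorm
        simp
      rw [hΔ0, hstack0]
      have : H + (fun _ => (0 : Matrix (Fin d) (Fin d) ℝ)) = H := by
        funext i; simp
      rw [this, mul_zero, add_zero]
  exact step1.trans (mul_le_mul_of_nonneg_left step2 hrpow)
end

section
/- Let H be a d×d real symmetric matrix, g ∈ ℝ^d with g ≠ 0, and M > 0. Set λ := √(M‖g‖) and δ := max{0, −λ_min(H)}, where λ_min(H) is the smallest eigenvalue of H. If s ∈ ℝ^d satisfies (H + (λ + δ)I)s = −g, then λ‖s‖ ≤ ‖g‖; consequently ‖s‖ ≤ √(‖g‖/M) and M‖s‖ ≤ λ. -/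
open Finset in
lemma rayleigh_lb {d : ℕ} (H : Matrix (Fin d) (Fin d) ℝ) (hH : H.IsHermitian)
    (x : EuclideanSpace ℝ (Fin d)) [Nonempty (Fin d)] :
    (⨅ i, hH.eigenvalues i) * ‖x‖ ^ 2
      ≤ inner ℝ x (Matrix.toEuclideanCLM (𝕜 := ℝ) H x) := by
  set T := Matrix.toEuclideanCLM (𝕜 := ℝ) H with hT
  set b := hH.eigenvectorBasis with hb
  have hsym : (Matrix.toEuclideanLin H).IsSymmetric :=
    Matrix.isHermitian_iff_isSymmetric.1 hH
  have hTlin : ∀ y : EuclideanSpace ℝ (Fin d), T y = Matrix.toEuclideanLin H y := by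
    intro y
    rw [hT, ← Matrix.coe_toEuclideanCLM_eq_toEuclideanLin]
    rfl
  have hTb : ∀ i, T (b i) = hH.eigenvalues i • b i := by
    intro i
    apply (WithLp.equiv 2 (Fin d → ℝ)).injective
    have := hH.mulVec_eigenvectorBasis i
    rw [WithLp.equiv_apply, WithLp.equiv_apply, hT, Matrix.ofLp_toEuclideanCLM]
    simpa using this
  have hexp : (inner ℝ x (T x) : ℝ) = ∑ i, hH.eigenvalues i * (inner ℝ x (b i)) ^ 2 := by
    rw [← b.sum_inner_mul_inner x (T x)]
    congr 1; ext i
    have h1 : (inner ℝ (b i) (T x) : ℝ) = inner ℝ (T (b i)) x := by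
      rw [hTlin, hTlin]
      exact (hsym (b i) x).symm
    rw [h1, hTb i, inner_smul_left, real_inner_comm (b i) x]
    ring_nf
    simp [RCLike.star_def]
  have hnorm : ‖x‖ ^ 2 = ∑ i, (inner ℝ x (b i) : ℝ) ^ 2 := by
    have := b.sum_inner_mul_inner x x
    rw [real_inner_self_eq_norm_sq] at this
    rw [← this]
    congr 1; ext i
    rw [real_inner_comm (b i) x]; ring
  rw [hexp, hnorm, Finset.mul_sum]
  apply Finset.sum_le_sum
  intro i _
  have hle : (⨅ j, hH.eigenvalues j) ≤ hH.eigenvalues i :=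
    ciInf_le (Finite.bddBelow_range _) i
  nlinarith [sq_nonneg (inner ℝ x (b i) : ℝ)]

/-- uniform local step bound.
With `λ = √(M‖g‖)`, `δ = max{0, −λ_min(H)}`, and `(H + (λ+δ)I)s = −g`, one has
`λ‖s‖ ≤ ‖g‖`, `‖s‖ ≤ √(‖g‖/M)` and `M‖s‖ ≤ λ`. -/
theorem stmt6 {d : ℕ} (H : Matrix (Fin d) (Fin d) ℝ) (hH : H.IsHermitian)
    (g s : EuclideanSpace ℝ (Fin d)) (hg : g ≠ 0)
    (M : ℝ) (hM : 0 < M)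
    (lam δ : ℝ)
    (hlam : lam = Real.sqrt (M * ‖g‖))
    (hδ : δ = max 0 (-(⨅ i, hH.eigenvalues i)))
    (hs : Matrix.toEuclideanCLM (𝕜 := ℝ) (H + (lam + δ) • (1 : Matrix (Fin d) (Fin d) ℝ)) s
      = -g) :
    lam * ‖s‖ ≤ ‖g‖ ∧ ‖s‖ ≤ Real.sqrt (‖g‖ / M) ∧ M * ‖s‖ ≤ lam := by
  have hd : Nonempty (Fin d) := by
    rcases Nat.eq_zero_or_pos d with h | h
    · exfalso; apply hg; subst h; ext i; exact absurd i.2 (by omega)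
    · exact ⟨⟨0, h⟩⟩
  have hgn : 0 < ‖g‖ := norm_pos_iff.2 hg
  have hlam_sq : lam ^ 2 = M * ‖g‖ := by
    rw [hlam, Real.sq_sqrt (by positivity)]
  have hlam_pos : 0 < lam := by
    rw [hlam]; exact Real.sqrt_pos.2 (by positivity)
  -- expand hs
  have hs' : Matrix.toEuclideanCLM (𝕜 := ℝ) H s + (lam + δ) • s = -g := by
    have := hs
    rw [map_add, map_smul, map_one] at this
    simpa using this
  -- inner with s
  have key : (inner ℝ s (Matrix.toEuclideanCLM (𝕜 := ℝ) H s) : ℝ) + (lam + δ) * ‖s‖ ^ 2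
      = - inner ℝ s g := by
    have h := congrArg (fun y => (inner ℝ s y : ℝ)) hs'
    simp only [inner_add_right, inner_smul_right, inner_neg_right] at h
    rw [real_inner_self_eq_norm_sq] at h
    linarith [h]
  have hray := rayleigh_lb H hH s
  have hδμ : 0 ≤ δ + (⨅ i, hH.eigenvalues i) := by
    rw [hδ]
    rcases le_total 0 (-(⨅ i, hH.eigenvalues i)) with h | h
    · rw [max_eq_right h]; linarith
    · rw [max_eq_left (by linarith)]; linarith
  have hcs : - (inner ℝ s g : ℝ) ≤ ‖s‖ * ‖g‖ := by
    have := abs_real_inner_le_norm s g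
    cases' abs_le.1 this with h1 h2
    linarith
  have hmain : lam * ‖s‖ ^ 2 ≤ ‖s‖ * ‖g‖ := by
    nlinarith [sq_nonneg ‖s‖]
  have h1 : lam * ‖s‖ ≤ ‖g‖ := by
    rcases eq_or_lt_of_le (norm_nonneg s) with h | h
    · rw [← h]; simpa using hgn.le
    · nlinarith
  have hMs : M * ‖s‖ ^ 2 ≤ ‖g‖ := by
    nlinarith
  refine ⟨h1, ?_, ?_⟩
  · rw [Real.le_sqrt (norm_nonneg s) (by positivity)]
    rw [le_div_iff₀ hM]
    linarith [hMs]
  · have : M * ‖s‖ ≤ Real.sqrt (M * ‖g‖) := by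
      rw [Real.le_sqrt (by positivity) (by positivity)]
      nlinarith
    rw [hlam]; exact this
end

section
/- Let M ≥ L₂ > 0. For i = 1,…,N let gᵢ ∈ ℝ^d, let Hᵢ be a d×d real symmetric matrix, set λᵢ := √(M‖gᵢ‖) and δᵢ := max{0, −λ_min(Hᵢ)}, and let sᵢ := 0 if gᵢ = 0 and otherwise the solution of (Hᵢ + (λᵢ + δᵢ)I)sᵢ = −gᵢ. Then L₂·‖(1/N)∑ᵢ sᵢ‖ ≤ (1/N)∑ᵢ λᵢ ≤ (1/N)∑ᵢ (λᵢ + δᵢ). -/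
open scoped BigOperators
open Matrix

lemma psd_shift {d : ℕ} {A : Matrix (Fin d) (Fin d) ℝ} (hA : A.IsHermitian) {δ : ℝ}
    (hδ : ∀ j, 0 ≤ hA.eigenvalues j + δ) :
    (A + δ • (1 : Matrix (Fin d) (Fin d) ℝ)).PosSemidef := by
  set U : Matrix (Fin d) (Fin d) ℝ := (hA.eigenvectorUnitary : Matrix (Fin d) (Fin d) ℝ) with hUdef
  have hU : U * star U = 1 := (Matrix.mem_unitaryGroup_iff).mp hA.eigenvectorUnitary.2
  have hkey : A + δ • (1 : Matrix (Fin d) (Fin d) ℝ)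
      = U * (Matrix.diagonal (fun j => hA.eigenvalues j + δ)) * star U := by
    have hD : Matrix.diagonal (fun j => hA.eigenvalues j + δ)
        = Matrix.diagonal (RCLike.ofReal ∘ hA.eigenvalues) + δ • (1 : Matrix (Fin d) (Fin d) ℝ) := by
      rw [Matrix.smul_one_eq_diagonal, ← Matrix.diagonal_add]
      congr 1
    rw [hD, Matrix.mul_add, Matrix.add_mul]
    conv_lhs => rw [hA.spectral_theorem, Unitary.conjStarAlgAut_apply]
    congr 1
    rw [Matrix.mul_smul, Matrix.mul_one, Matrix.smul_mul, hU]
  rw [hkey]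
  exact (Matrix.posSemidef_diagonal_iff.mpr hδ).mul_mul_conjTranspose_same U


/-- average-step regularization bound.
With local regularized Newton steps `sᵢ` (zero when `gᵢ = 0`, otherwise solving
`(Hᵢ + (λᵢ + δᵢ)I)sᵢ = −gᵢ` with `λᵢ = √(M‖gᵢ‖)`, `δᵢ = max{0, −λ_min(Hᵢ)}`) and `M ≥ L₂ > 0`,
`L₂‖(1/N)∑ᵢ sᵢ‖ ≤ (1/N)∑ᵢ λᵢ ≤ (1/N)∑ᵢ (λᵢ + δᵢ)`. -/
theorem stmt7 {N d : ℕ} (hN : 0 < N)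
    (M L₂ : ℝ) (hL₂ : 0 < L₂) (hML : L₂ ≤ M)
    (g : Fin N → EuclideanSpace ℝ (Fin d))
    (H : Fin N → Matrix (Fin d) (Fin d) ℝ)
    (hH : ∀ i, (H i).IsHermitian)
    (lam δ : Fin N → ℝ)
    (hlam : ∀ i, lam i = Real.sqrt (M * ‖g i‖))
    (hδ : ∀ i, δ i = max 0 (-(⨅ j, (hH i).eigenvalues j)))
    (s : Fin N → EuclideanSpace ℝ (Fin d))
    (hs0 : ∀ i, g i = 0 → s i = 0)
    (hs : ∀ i, g i ≠ 0 →
      Matrix.toEuclideanCLM (𝕜 := ℝ)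
        (H i + (lam i + δ i) • (1 : Matrix (Fin d) (Fin d) ℝ)) (s i) = -(g i)) :
    L₂ * ‖(N : ℝ)⁻¹ • ∑ i, s i‖ ≤ (N : ℝ)⁻¹ * ∑ i, lam i ∧
      (N : ℝ)⁻¹ * ∑ i, lam i ≤ (N : ℝ)⁻¹ * ∑ i, (lam i + δ i) := by
  have hlam_nonneg : ∀ i, 0 ≤ lam i := fun i => (hlam i).symm ▸ Real.sqrt_nonneg _
  have hδ_nonneg : ∀ i, 0 ≤ δ i := fun i => (hδ i).symm ▸ le_max_left _ _
  -- key per-index bound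
  have hkey : ∀ i, M * ‖s i‖ ≤ lam i := by
    intro i
    by_cases hg : g i = 0
    · rw [hs0 i hg, norm_zero, mul_zero]; exact hlam_nonneg i
    · -- PSD part
      have hpsd : (H i + δ i • (1 : Matrix (Fin d) (Fin d) ℝ)).PosSemidef := by
        apply psd_shift (hH i)
        intro j
        have h1 : (⨅ j', (hH i).eigenvalues j') ≤ (hH i).eigenvalues j :=
          ciInf_le (Finite.bddBelow_range _) j
        have h2 : -(⨅ j', (hH i).eigenvalues j') ≤ δ i := (hδ i).symm ▸ le_max_right _ _
        linarith
      -- quadratic form identity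
      have heq := hs i hg
      have hinner : inner (𝕜 := ℝ) (s i)
          (Matrix.toEuclideanCLM (𝕜 := ℝ)
            (H i + (lam i + δ i) • (1 : Matrix (Fin d) (Fin d) ℝ)) (s i)) =
          inner (𝕜 := ℝ) (s i) (-(g i)) := by rw [heq]
      -- rewrite LHS as dot products
      have hLHS : inner (𝕜 := ℝ) (s i)
          (Matrix.toEuclideanCLM (𝕜 := ℝ)
            (H i + (lam i + δ i) • (1 : Matrix (Fin d) (Fin d) ℝ)) (s i)) =
          dotProduct (WithLp.equiv 2 _ (s i))
            ((H i + δ i • 1) *ᵥ (WithLp.equiv 2 _ (s i)))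
            + lam i * dotProduct (WithLp.equiv 2 _ (s i)) (WithLp.equiv 2 _ (s i)) := by
        have hA : (H i + (lam i + δ i) • (1 : Matrix (Fin d) (Fin d) ℝ))
            = (H i + δ i • 1) + lam i • (1 : Matrix (Fin d) (Fin d) ℝ) := by
          module
        rw [hA]
        rw [EuclideanSpace.inner_eq_star_dotProduct]
        simp only [Matrix.ofLp_toEuclideanCLM, Matrix.toLin'_apply]
        rw [Matrix.add_mulVec, Matrix.smul_mulVec, Matrix.one_mulVec,
          add_dotProduct, smul_dotProduct]
        simp [star_trivial, smul_eq_mul, dotProduct_comm]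
      have hdot_nonneg : 0 ≤ dotProduct (WithLp.equiv 2 _ (s i))
          ((H i + δ i • 1) *ᵥ (WithLp.equiv 2 _ (s i))) := by
        simpa using hpsd.dotProduct_mulVec_nonneg (WithLp.equiv 2 _ (s i))
      have hself : dotProduct (WithLp.equiv 2 _ (s i)) (WithLp.equiv 2 _ (s i))
          = ‖s i‖ ^ 2 := by
        rw [← real_inner_self_eq_norm_sq]
        rfl
      have hCS : inner (𝕜 := ℝ) (s i) (-(g i)) ≤ ‖s i‖ * ‖g i‖ := by
        calc inner (𝕜 := ℝ) (s i) (-(g i)) ≤ ‖s i‖ * ‖-(g i)‖ := real_inner_le_norm _ _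
        _ = ‖s i‖ * ‖g i‖ := by rw [norm_neg]
      have hmain : lam i * ‖s i‖ ^ 2 ≤ ‖s i‖ * ‖g i‖ := by
        rw [hLHS, hself] at hinner
        linarith [hdot_nonneg, hCS, hinner]
      have hlamsq : lam i ^ 2 = M * ‖g i‖ := by
        have hM : (0:ℝ) < M := lt_of_lt_of_le hL₂ hML
        rw [hlam i, Real.sq_sqrt (mul_nonneg hM.le (norm_nonneg _))]
      have hlampos : 0 < lam i := by
        rw [hlam i]
        apply Real.sqrt_pos.mpr
        have hM : (0:ℝ) < M := lt_of_lt_of_le hL₂ hML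
        have : 0 < ‖g i‖ := norm_pos_iff.mpr hg
        positivity
      rcases eq_or_lt_of_le (norm_nonneg (s i)) with hz | hz
      · rw [← hz, mul_zero]; exact hlam_nonneg i
      · nlinarith [mul_pos hlampos hz]
  -- assemble
  have hNpos : (0:ℝ) < (N:ℝ) := by exact_mod_cast hN
  have hNinv : (0:ℝ) ≤ (N:ℝ)⁻¹ := by positivity
  constructor
  · have h1 : ‖(N : ℝ)⁻¹ • ∑ i, s i‖ = (N:ℝ)⁻¹ * ‖∑ i, s i‖ := by
      rw [norm_smul, Real.norm_eq_abs, abs_of_nonneg hNinv]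
    rw [h1]
    have h2 : L₂ * ‖∑ i, s i‖ ≤ ∑ i, lam i := by
      calc L₂ * ‖∑ i, s i‖ ≤ L₂ * ∑ i, ‖s i‖ :=
            mul_le_mul_of_nonneg_left (norm_sum_le _ _) hL₂.le
        _ = ∑ i, L₂ * ‖s i‖ := Finset.mul_sum _ _ _
        _ ≤ ∑ i, lam i := Finset.sum_le_sum (fun i _ => by
            have := hkey i
            nlinarith [norm_nonneg (s i)])
    calc L₂ * ((N:ℝ)⁻¹ * ‖∑ i, s i‖) = (N:ℝ)⁻¹ * (L₂ * ‖∑ i, s i‖) := by ring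
      _ ≤ (N:ℝ)⁻¹ * ∑ i, lam i := mul_le_mul_of_nonneg_left h2 hNinv
  · apply mul_le_mul_of_nonneg_left _ hNinv
    exact Finset.sum_le_sum (fun i _ => le_add_of_nonneg_right (hδ_nonneg i))
end

section
/- For i = 1,…,N let Aᵢ := Hᵢ + λ̃ᵢ·I, where Hᵢ is a d×d real symmetric matrix and λ̃ᵢ > 0 are reals, and set H̄ := (1/N)∑ᵢ Hᵢ, λ̄ := (1/N)∑ᵢ λ̃ᵢ, A := H̄ + λ̄·I, and μ := minᵢ λ̃ᵢ. Assume Aᵢ ⪰ μ·I for every i and A ⪰ λ̄·I (so all these matrices are invertible). Let g₁,…,g_N ∈ ℝ^d with average ḡ := (1/N)∑ᵢ gᵢ, and define sᵢ := −Aᵢ⁻¹gᵢ and s_ref := −A⁻¹ḡ. Then ‖(1/N)∑ᵢ sᵢ − s_ref‖ ≤ (1/μ)·Δᵍ + (‖ḡ‖/(μ·λ̄))·(Δᴴ + Δᴸ), where Δᵍ := (1/N)∑ᵢ‖gᵢ − ḡ‖, Δᴴ := (1/N)∑ᵢ‖Hᵢ − H̄‖₂, and Δᴸ := (1/N)∑ᵢ|λ̃ᵢ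 − λ̄|. -/
open scoped BigOperators

/-- Spectral norm of a real matrix, as the operator norm on Euclidean space. -/
noncomputable def specNorm {d : ℕ} (A : Matrix (Fin d) (Fin d) ℝ) : ℝ :=
  ‖Matrix.toEuclideanCLM (𝕜 := ℝ) A‖

open Matrix in
lemma coercive {d : ℕ} (M : Matrix (Fin d) (Fin d) ℝ) (c : ℝ)
    (h : (M - c • (1 : Matrix (Fin d) (Fin d) ℝ)).PosSemidef)
    (x : EuclideanSpace ℝ (Fin d)) :
    c * ‖x‖ ≤ ‖Matrix.toEuclideanCLM (𝕜 := ℝ) M x‖ := by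
  set y := Matrix.toEuclideanCLM (𝕜 := ℝ) M x with hy
  set v : Fin d → ℝ := WithLp.equiv 2 (Fin d → ℝ) x with hv
  have hre := h.re_dotProduct_nonneg v
  have hMx : dotProduct v (M *ᵥ v) = inner ℝ x y := by
    rw [EuclideanSpace.inner_eq_star_dotProduct]
    simp [hv, hy, dotProduct_comm]
  have hvv : dotProduct v v = ‖x‖ ^ 2 := by
    have : (inner ℝ x x : ℝ) = dotProduct v v := by
      rw [EuclideanSpace.inner_eq_star_dotProduct]; simp [hv]
    rw [← this, real_inner_self_eq_norm_sq]
  have hkey : c * ‖x‖ ^ 2 ≤ inner ℝ x y := by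
    simp only [Matrix.sub_mulVec, Matrix.smul_mulVec, Matrix.one_mulVec,
      dotProduct_sub, dotProduct_smul, star_trivial, RCLike.re_to_real,
      smul_eq_mul] at hre
    rw [hMx, hvv] at hre
    linarith
  have hub : (inner ℝ x y : ℝ) ≤ ‖x‖ * ‖y‖ := real_inner_le_norm x y
  rcases eq_or_lt_of_le (norm_nonneg x) with h0 | h0
  · rw [← h0, mul_zero]; exact norm_nonneg y
  · nlinarith


set_option synthInstance.maxHeartbeats 1000000 in
set_option maxHeartbeats 2000000 in
/-- step dispersion via a resolvent identity.
With `Aᵢ = Hᵢ + λ̃ᵢI`, `A = H̄ + λ̄I`, `μ = minᵢ λ̃ᵢ`, `Aᵢ ⪰ μI`, `A ⪰ λ̄I`,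
`sᵢ = −Aᵢ⁻¹gᵢ` and `s_ref = −A⁻¹ḡ`:
`‖(1/N)∑ᵢ sᵢ − s_ref‖ ≤ (1/μ)·Δᵍ + (‖ḡ‖/(μλ̄))·(Δᴴ + Δᴸ)`. -/
theorem stmt11 {N d : ℕ} (hN : 0 < N)
    (H : Fin N → Matrix (Fin d) (Fin d) ℝ) (hH : ∀ i, (H i).IsHermitian)
    (lam : Fin N → ℝ) (hlam : ∀ i, 0 < lam i)
    (A : Fin N → Matrix (Fin d) (Fin d) ℝ)
    (hA : ∀ i, A i = H i + lam i • (1 : Matrix (Fin d) (Fin d) ℝ))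
    (Hbar : Matrix (Fin d) (Fin d) ℝ) (hHbar : Hbar = (N : ℝ)⁻¹ • ∑ i, H i)
    (lambar : ℝ) (hlambar : lambar = (N : ℝ)⁻¹ * ∑ i, lam i)
    (Abar : Matrix (Fin d) (Fin d) ℝ)
    (hAbar : Abar = Hbar + lambar • (1 : Matrix (Fin d) (Fin d) ℝ))
    (μ : ℝ) (hμ : μ = ⨅ i, lam i)
    (hAiPSD : ∀ i, (A i - μ • (1 : Matrix (Fin d) (Fin d) ℝ)).PosSemidef)
    (hAbarPSD : (Abar - lambar • (1 : Matrix (Fin d) (Fin d) ℝ)).PosSemidef)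
    (g : Fin N → EuclideanSpace ℝ (Fin d))
    (gbar : EuclideanSpace ℝ (Fin d)) (hgbar : gbar = (N : ℝ)⁻¹ • ∑ i, g i)
    (s : Fin N → EuclideanSpace ℝ (Fin d))
    (hs : ∀ i, Matrix.toEuclideanCLM (𝕜 := ℝ) (A i) (s i) = -(g i))
    (sref : EuclideanSpace ℝ (Fin d))
    (hsref : Matrix.toEuclideanCLM (𝕜 := ℝ) Abar sref = -gbar) :
    ‖(N : ℝ)⁻¹ • ∑ i, s i - sref‖ ≤
      (1 / μ) * ((N : ℝ)⁻¹ * ∑ i, ‖g i - gbar‖)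
        + (‖gbar‖ / (μ * lambar)) *
            ((N : ℝ)⁻¹ * ∑ i, specNorm (H i - Hbar)
              + (N : ℝ)⁻¹ * ∑ i, |lam i - lambar|) := by
  have : Nonempty (Fin N) := ⟨⟨0, hN⟩⟩
  have hNR : (0:ℝ) < N := by exact_mod_cast hN
  obtain ⟨j, hj⟩ := exists_eq_ciInf_of_finite (f := lam)
  have hμpos : 0 < μ := by rw [hμ, ← hj]; exact hlam j
  have hlampos : 0 < lambar := by
    rw [hlambar]
    exact mul_pos (inv_pos.2 hNR)
      (Finset.sum_pos (fun i _ => hlam i) Finset.univ_nonempty)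
  have hsrefn : ‖sref‖ ≤ ‖gbar‖ / lambar := by
    have h := coercive Abar lambar hAbarPSD sref
    rw [hsref, norm_neg] at h
    rw [le_div_iff₀ hlampos]
    linarith
  have key : ∀ i, ‖s i - sref‖ ≤ (1/μ) * ‖g i - gbar‖
      + (‖gbar‖/(μ*lambar)) * (specNorm (H i - Hbar) + |lam i - lambar|) := by
    intro i
    have hdiff : Matrix.toEuclideanCLM (𝕜 := ℝ) (A i) (s i - sref)
        = -(g i - gbar) - Matrix.toEuclideanCLM (𝕜 := ℝ) (A i - Abar) sref := by
      rw [map_sub (Matrix.toEuclideanCLM (𝕜 := ℝ) (A i)), map_sub, ContinuousLinearMap.sub_apply,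
        hs i, hsref]
      abel
    have h1 : μ * ‖s i - sref‖ ≤ ‖Matrix.toEuclideanCLM (𝕜 := ℝ) (A i) (s i - sref)‖ :=
      coercive _ _ (hAiPSD i) _
    have h2 : ‖Matrix.toEuclideanCLM (𝕜 := ℝ) (A i) (s i - sref)‖
        ≤ ‖g i - gbar‖ + ‖Matrix.toEuclideanCLM (𝕜 := ℝ) (A i - Abar)‖ * ‖sref‖ := by
      rw [hdiff]
      refine (norm_sub_le _ _).trans ?_
      rw [norm_neg]
      gcongr
      exact ContinuousLinearMap.le_opNorm _ _
    have h3 : ‖Matrix.toEuclideanCLM (𝕜 := ℝ) (A i - Abar)‖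
        ≤ specNorm (H i - Hbar) + |lam i - lambar| := by
      have hAA : A i - Abar = (H i - Hbar) + (lam i - lambar) • (1 : Matrix (Fin d) (Fin d) ℝ) := by
        rw [hA, hAbar, sub_smul]; abel
      have hscal : ‖Matrix.toEuclideanCLM (𝕜 := ℝ)
          ((lam i - lambar) • (1 : Matrix (Fin d) (Fin d) ℝ))‖ ≤ |lam i - lambar| := by
        refine ContinuousLinearMap.opNorm_le_bound _ (abs_nonneg _) fun x => ?_
        have hx : Matrix.toEuclideanCLM (𝕜 := ℝ)
            ((lam i - lambar) • (1 : Matrix (Fin d) (Fin d) ℝ)) x = (lam i - lambar) • x := by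
          refine (WithLp.equiv 2 _).injective ?_
          rw [WithLp.equiv_apply, Matrix.ofLp_toEuclideanCLM]
          simp [Matrix.toLin'_apply, Matrix.smul_mulVec, Matrix.one_mulVec]
        rw [hx, norm_smul, Real.norm_eq_abs]
      rw [hAA, map_add]
      refine (norm_add_le _ _).trans ?_
      unfold specNorm
      exact add_le_add_right hscal _
    have hDr : ‖Matrix.toEuclideanCLM (𝕜 := ℝ) (A i - Abar)‖ * ‖sref‖
        ≤ (specNorm (H i - Hbar) + |lam i - lambar|) * (‖gbar‖ / lambar) :=
      mul_le_mul h3 hsrefn (norm_nonneg _) (add_nonneg (by unfold specNorm; positivity) (abs_nonneg _))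
    have hmain : μ * ‖s i - sref‖
        ≤ ‖g i - gbar‖ + (‖gbar‖ / lambar) * (specNorm (H i - Hbar) + |lam i - lambar|) := by
      nlinarith [h1.trans h2]
    calc ‖s i - sref‖ = (1/μ) * (μ * ‖s i - sref‖) := by field_simp
      _ ≤ (1/μ) * (‖g i - gbar‖ + (‖gbar‖ / lambar) * (specNorm (H i - Hbar) + |lam i - lambar|)) := by
          apply mul_le_mul_of_nonneg_left hmain (by positivity)
      _ = (1/μ) * ‖g i - gbar‖
          + (‖gbar‖/(μ*lambar)) * (specNorm (H i - Hbar) + |lam i - lambar|) := by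
          field_simp
  have havg : (N : ℝ)⁻¹ • ∑ i, s i - sref = (N : ℝ)⁻¹ • ∑ i, (s i - sref) := by
    rw [Finset.sum_sub_distrib, smul_sub, Finset.sum_const, Finset.card_univ, Fintype.card_fin,
      ← Nat.cast_smul_eq_nsmul ℝ, smul_smul, inv_mul_cancel₀ (ne_of_gt hNR), one_smul]
  rw [havg]
  calc ‖(N : ℝ)⁻¹ • ∑ i, (s i - sref)‖ ≤ (N : ℝ)⁻¹ * ∑ i, ‖s i - sref‖ := by
        rw [norm_smul, Real.norm_eq_abs, abs_of_pos (inv_pos.2 hNR)]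
        exact mul_le_mul_of_nonneg_left (norm_sum_le _ _) (le_of_lt (inv_pos.2 hNR))
    _ ≤ (N : ℝ)⁻¹ * ∑ i, ((1/μ) * ‖g i - gbar‖
          + (‖gbar‖/(μ*lambar)) * (specNorm (H i - Hbar) + |lam i - lambar|)) := by
        gcongr with i
        exact key i
    _ = (1 / μ) * ((N : ℝ)⁻¹ * ∑ i, ‖g i - gbar‖)
        + (‖gbar‖ / (μ * lambar)) *
            ((N : ℝ)⁻¹ * ∑ i, specNorm (H i - Hbar)
              + (N : ℝ)⁻¹ * ∑ i, |lam i - lambar|) := by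
        simp only [Finset.sum_add_distrib, ← Finset.mul_sum, mul_add]
        ring
end

section
/- Let M > 0 and α ∈ (0,1). Let g₁,…,g_N ∈ ℝ^d with average ḡ := (1/N)∑ᵢ gᵢ ≠ 0, and let δ₁,…,δ_N ≥ 0. Set λᵢ := √(M‖gᵢ‖), λ̃ᵢ := λᵢ + δᵢ, λ̄ := (1/N)∑ᵢ λ̃ᵢ, δ̄ := (1/N)∑ᵢ δᵢ, and Δᵍ := (1/N)∑ᵢ‖gᵢ − ḡ‖. If maxᵢ‖gᵢ − ḡ‖ ≤ α‖ḡ‖, then (1/N)∑ᵢ|λ̃ᵢ − λ̄| ≤ (√M/√(1−α))·Δᵍ/√‖ḡ‖ + 2δ̄. -/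
open scoped BigOperators

lemma sqrt_abs_sub_le' {a b c : ℝ} (hc : 0 < c) (ha : c ≤ a) (hb : c ≤ b) :
    |Real.sqrt a - Real.sqrt b| ≤ |a - b| / (2 * Real.sqrt c) := by
  have hc' : 0 < Real.sqrt c := Real.sqrt_pos.mpr hc
  have ha0 : 0 ≤ a := hc.le.trans ha
  have hb0 : 0 ≤ b := hc.le.trans hb
  have hsa : Real.sqrt a * Real.sqrt a = a := Real.mul_self_sqrt ha0
  have hsb : Real.sqrt b * Real.sqrt b = b := Real.mul_self_sqrt hb0
  have h1 : Real.sqrt c ≤ Real.sqrt a := Real.sqrt_le_sqrt ha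
  have h2 : Real.sqrt c ≤ Real.sqrt b := Real.sqrt_le_sqrt hb
  rw [le_div_iff₀ (by positivity)]
  rcases abs_cases (Real.sqrt a - Real.sqrt b) with ⟨h, _⟩ | ⟨h, _⟩ <;>
    rcases abs_cases (a - b) with ⟨h', _⟩ | ⟨h', _⟩ <;> rw [h, h'] <;> nlinarith

/-- regularizer dispersion bound.
With `λᵢ = √(M‖gᵢ‖)`, `λ̃ᵢ = λᵢ + δᵢ`, if `maxᵢ‖gᵢ − ḡ‖ ≤ α‖ḡ‖`, then
`(1/N)∑ᵢ|λ̃ᵢ − λ̄| ≤ (√M/√(1−α))·Δᵍ/√‖ḡ‖ + 2δ̄`. -/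
theorem stmt12 {N d : ℕ} (hN : 0 < N)
    (M α : ℝ) (hM : 0 < M) (hα0 : 0 < α) (hα1 : α < 1)
    (g : Fin N → EuclideanSpace ℝ (Fin d))
    (gbar : EuclideanSpace ℝ (Fin d)) (hgbar : gbar = (N : ℝ)⁻¹ • ∑ i, g i)
    (hg0 : gbar ≠ 0)
    (δ : Fin N → ℝ) (hδ : ∀ i, 0 ≤ δ i)
    (lam lamt : Fin N → ℝ)
    (hlam : ∀ i, lam i = Real.sqrt (M * ‖g i‖))
    (hlamt : ∀ i, lamt i = lam i + δ i)
    (lambar δbar Δg : ℝ)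
    (hlambar : lambar = (N : ℝ)⁻¹ * ∑ i, lamt i)
    (hδbar : δbar = (N : ℝ)⁻¹ * ∑ i, δ i)
    (hΔg : Δg = (N : ℝ)⁻¹ * ∑ i, ‖g i - gbar‖)
    (hmax : ∀ i, ‖g i - gbar‖ ≤ α * ‖gbar‖) :
    (N : ℝ)⁻¹ * ∑ i, |lamt i - lambar| ≤
      (Real.sqrt M / Real.sqrt (1 - α)) * (Δg / Real.sqrt ‖gbar‖) + 2 * δbar := by
  have hn : (0:ℝ) < (N:ℝ) := by exact_mod_cast hN
  have hgb : (0:ℝ) < ‖gbar‖ := norm_pos_iff.mpr hg0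
  have hα : (0:ℝ) < 1 - α := by linarith
  set c : ℝ := M * ((1 - α) * ‖gbar‖) with hc_def
  have hc : 0 < c := by positivity
  set C : ℝ := Real.sqrt M / (2 * Real.sqrt ((1 - α) * ‖gbar‖)) with hC_def
  have hCpos : 0 < C := by positivity
  -- lower bound on each ‖g i‖
  have hlow : ∀ i, (1 - α) * ‖gbar‖ ≤ ‖g i‖ := by
    intro i
    have h1 : ‖gbar‖ ≤ ‖g i‖ + ‖g i - gbar‖ := by
      have := norm_sub_le (g i) (g i - gbar)
      simpa using this
    have := hmax i
    nlinarith
  -- pairwise bound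
  have hpair : ∀ i j, |lamt i - lamt j| ≤
      C * (‖g i - gbar‖ + ‖g j - gbar‖) + (δ i + δ j) := by
    intro i j
    have hlamij : |lam i - lam j| ≤ C * (‖g i - gbar‖ + ‖g j - gbar‖) := by
      rw [hlam i, hlam j]
      have h1 : |Real.sqrt (M * ‖g i‖) - Real.sqrt (M * ‖g j‖)| ≤
          |M * ‖g i‖ - M * ‖g j‖| / (2 * Real.sqrt c) := by
        apply sqrt_abs_sub_le' hc
        · exact mul_le_mul_of_nonneg_left (hlow i) hM.le
        · exact mul_le_mul_of_nonneg_left (hlow j) hM.le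
      refine h1.trans ?_
      have h2 : |M * ‖g i‖ - M * ‖g j‖| = M * |‖g i‖ - ‖g j‖| := by
        rw [← mul_sub, abs_mul, abs_of_pos hM]
      have h3 : |‖g i‖ - ‖g j‖| ≤ ‖g i - gbar‖ + ‖g j - gbar‖ := by
        have h4 : |‖g i‖ - ‖g j‖| ≤ ‖g i - g j‖ := abs_norm_sub_norm_le _ _
        have h5 : ‖g i - g j‖ ≤ ‖g i - gbar‖ + ‖g j - gbar‖ := by
          have := norm_sub_le (g i - gbar) (g j - gbar)
          simpa [sub_sub_sub_cancel_right] using this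
        linarith
      have hsc : Real.sqrt c = Real.sqrt M * Real.sqrt ((1 - α) * ‖gbar‖) := by
        rw [hc_def, Real.sqrt_mul hM.le]
      have hsM : 0 < Real.sqrt M := Real.sqrt_pos.mpr hM
      have hs2 : 0 < Real.sqrt ((1 - α) * ‖gbar‖) := Real.sqrt_pos.mpr (by positivity)
      have hM2 : Real.sqrt M * Real.sqrt M = M := Real.mul_self_sqrt hM.le
      have heq : M * |‖g i‖ - ‖g j‖| / (2 * Real.sqrt c)
          = C * |‖g i‖ - ‖g j‖| := by
        rw [hsc, hC_def]
        field_simp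
        linear_combination (-|‖g i‖ - ‖g j‖|) * hM2
      rw [h2, heq]
      exact mul_le_mul_of_nonneg_left h3 hCpos.le
    have hδij : |δ i - δ j| ≤ δ i + δ j := by
      rcases abs_cases (δ i - δ j) with ⟨h, _⟩ | ⟨h, _⟩ <;> rw [h] <;>
        have := hδ i <;> have := hδ j <;> linarith
    have : lamt i - lamt j = (lam i - lam j) + (δ i - δ j) := by
      rw [hlamt i, hlamt j]; ring
    rw [this]
    calc |(lam i - lam j) + (δ i - δ j)| ≤ |lam i - lam j| + |δ i - δ j| := abs_add_le _ _
      _ ≤ _ := by linarith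
  -- each |lamt i - lambar| ≤ (1/N) ∑ j |lamt i - lamt j|
  have hjensen : ∀ i, |lamt i - lambar| ≤ (N:ℝ)⁻¹ * ∑ j, |lamt i - lamt j| := by
    intro i
    have h1 : lamt i - lambar = (N:ℝ)⁻¹ * ∑ j, (lamt i - lamt j) := by
      rw [hlambar, Finset.sum_sub_distrib, Finset.sum_const, Finset.card_univ,
        Fintype.card_fin]
      field_simp
      ring
    rw [h1, abs_mul, abs_of_nonneg (by positivity : (0:ℝ) ≤ (N:ℝ)⁻¹)]
    gcongr
    exact Finset.abs_sum_le_sum_abs _ _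
  -- combine
  have hsum : ∑ i, |lamt i - lambar| ≤
      (N:ℝ)⁻¹ * ∑ i, ∑ j, (C * (‖g i - gbar‖ + ‖g j - gbar‖) + (δ i + δ j)) := by
    calc ∑ i, |lamt i - lambar| ≤ ∑ i, (N:ℝ)⁻¹ * ∑ j, |lamt i - lamt j| :=
          Finset.sum_le_sum fun i _ => hjensen i
      _ = (N:ℝ)⁻¹ * ∑ i, ∑ j, |lamt i - lamt j| := by rw [Finset.mul_sum]
      _ ≤ _ := by
          gcongr with i _ j _
          exact hpair i j
  set Sa : ℝ := ∑ i, ‖g i - gbar‖ with hSa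
  set Sδ : ℝ := ∑ i, δ i with hSδ
  have hdouble : ∑ i : Fin N, ∑ j : Fin N,
      (C * (‖g i - gbar‖ + ‖g j - gbar‖) + (δ i + δ j))
      = (N:ℝ) * (2 * C * Sa + 2 * Sδ) := by
    have hinner : ∀ i : Fin N, ∑ j : Fin N,
        (C * (‖g i - gbar‖ + ‖g j - gbar‖) + (δ i + δ j))
        = (N:ℝ) * (C * ‖g i - gbar‖ + δ i) + (C * Sa + Sδ) := by
      intro i
      simp only [mul_add, Finset.sum_add_distrib, Finset.sum_const, Finset.card_univ,
        Fintype.card_fin, nsmul_eq_mul, ← Finset.mul_sum]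
      rw [← hSa, ← hSδ]
      ring
    rw [Finset.sum_congr rfl fun i _ => hinner i]
    simp only [mul_add, Finset.sum_add_distrib, Finset.sum_const, Finset.card_univ,
      Fintype.card_fin, nsmul_eq_mul, ← Finset.mul_sum]
    rw [← hSa, ← hSδ]
    ring
  have hfinal : (N:ℝ)⁻¹ * ∑ i, |lamt i - lambar| ≤ 2 * C * Δg + 2 * δbar := by
    have h1 : (N:ℝ)⁻¹ * ∑ i, |lamt i - lambar| ≤
        (N:ℝ)⁻¹ * ((N:ℝ)⁻¹ * ((N:ℝ) * (2 * C * Sa + 2 * Sδ))) := by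
      rw [← hdouble]
      gcongr
    refine h1.trans_eq ?_
    rw [hΔg, hδbar]
    field_simp
    try ring
  refine hfinal.trans_eq ?_
  have h2C : 2 * C = Real.sqrt M / Real.sqrt (1 - α) / Real.sqrt ‖gbar‖ := by
    rw [hC_def, Real.sqrt_mul hα.le]
    field_simp
    try ring
  rw [h2C]
  ring
end

section
/- Let f : ℝ^d → ℝ be twice continuously differentiable, x̄ ∈ ℝ^d, and M_H ≥ ‖∇²f(x̄)‖₂. Let λ > 0, η ∈ (0,1), H̄ a d×d real symmetric matrix, ḡ ∈ ℝ^d, s̄ ∈ ℝ^d, and s_ref ∈ ℝ^d with (H̄ + λI)s_ref = −ḡ. Suppose (1) ‖s̄ − s_ref‖ ≤ (η/8)·(λ/(M_H + λ))·‖s̄‖, (2) ‖∇f(x̄) − ḡ‖ ≤ (η/8)·λ·‖s̄‖, and (3) ‖∇²f(x̄) − H̄‖₂ ≤ (η/8)·λ. Then ‖(∇²f(x̄) + λI)s̄ + ∇f(x̄)‖ ≤ η·λ·‖s̄‖. -/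
lemma stmt13_aux (MH lam η s N1 N2 N3 : ℝ) (hMH0 : 0 ≤ MH) (hlam : 0 < lam)
    (hη0 : 0 < η) (hη1 : η < 1) (hs : 0 ≤ s)
    (hN1 : N1 ≤ η / 8 * lam * s)
    (hN2 : N2 ≤ (MH + η / 8 * lam + lam) * (η / 8 * (lam / (MH + lam)) * s))
    (hN3 : N3 ≤ η / 8 * lam * s) :
    N1 + N2 + N3 ≤ η * lam * s := by
  have hden : (0:ℝ) < MH + lam := by linarith
  have hc : lam / (MH + lam) ≤ 1 := by
    rw [div_le_one hden]; linarith
  have hc0 : 0 ≤ lam / (MH + lam) := by positivity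
  have hX : (MH + lam) * (η / 8 * (lam / (MH + lam)) * s) = η / 8 * lam * s := by
    field_simp
  have hec : η / 8 * (lam / (MH + lam)) ≤ 1 := by nlinarith
  have hXle : η / 8 * (lam / (MH + lam)) * s ≤ s := mul_le_of_le_one_left hs hec
  have h2' : (η / 8 * lam) * (η / 8 * (lam / (MH + lam)) * s)
      ≤ (η / 8 * lam) * s := mul_le_mul_of_nonneg_left hXle (by positivity)
  have hexp : (MH + η / 8 * lam + lam) * (η / 8 * (lam / (MH + lam)) * s)
      = (MH + lam) * (η / 8 * (lam / (MH + lam)) * s)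
        + (η / 8 * lam) * (η / 8 * (lam / (MH + lam)) * s) := by ring
  have hnn : 0 ≤ η * lam * s := by positivity
  nlinarith [hX, h2', hexp]

/-- inexact regularized Newton condition.
If `(H̄ + λI)s_ref = −ḡ` and the dispersion-control, gradient-bridge, and
Hessian-bridge accuracy conditions hold, then
`‖(∇²f(x̄) + λI)s̄ + ∇f(x̄)‖ ≤ η·λ·‖s̄‖`. -/
theorem stmt13 {d : ℕ} (f : EuclideanSpace ℝ (Fin d) → ℝ)
    (hf : ContDiff ℝ 2 f)
    (xbar : EuclideanSpace ℝ (Fin d))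
    (MH : ℝ) (hMH : ‖fderiv ℝ (gradient f) xbar‖ ≤ MH)
    (lam η : ℝ) (hlam : 0 < lam) (hη0 : 0 < η) (hη1 : η < 1)
    (Hbar : Matrix (Fin d) (Fin d) ℝ) (hHbar : Hbar.IsHermitian)
    (gbar sbar sref : EuclideanSpace ℝ (Fin d))
    (hsref : Matrix.toEuclideanCLM (𝕜 := ℝ) Hbar sref + lam • sref = -gbar)
    (h1 : ‖sbar - sref‖ ≤ (η / 8) * (lam / (MH + lam)) * ‖sbar‖)
    (h2 : ‖gradient f xbar - gbar‖ ≤ (η / 8) * lam * ‖sbar‖)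
    (h3 : ‖fderiv ℝ (gradient f) xbar - Matrix.toEuclideanCLM (𝕜 := ℝ) Hbar‖
      ≤ (η / 8) * lam) :
    ‖fderiv ℝ (gradient f) xbar sbar + lam • sbar + gradient f xbar‖
      ≤ η * lam * ‖sbar‖ := by
  set H := fderiv ℝ (gradient f) xbar with hH
  set A := Matrix.toEuclideanCLM (𝕜 := ℝ) Hbar with hA
  set g := gradient f xbar with hg
  have hAsref : A sref = -gbar - lam • sref := eq_sub_of_add_eq hsref
  have key : H sbar + lam • sbar + g
      = (H - A) sbar + (A (sbar - sref) + lam • (sbar - sref)) + (g - gbar) := by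
    rw [ContinuousLinearMap.sub_apply, map_sub, hAsref]
    module
  rw [key]
  have hMH0 : (0:ℝ) ≤ MH := le_trans (norm_nonneg _) hMH
  have hs0 : (0:ℝ) ≤ ‖sbar‖ := norm_nonneg _
  -- bound on the first term
  have b1 : ‖(H - A) sbar‖ ≤ (η / 8) * lam * ‖sbar‖ :=
    le_trans ((H - A).le_opNorm sbar) (mul_le_mul_of_nonneg_right h3 hs0)
  -- bound on the operator norm of A
  have hAnorm : ‖A‖ ≤ MH + (η / 8) * lam := by
    have hAle : ‖A‖ ≤ ‖H‖ + ‖H - A‖ := by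
      calc ‖A‖ = ‖H - (H - A)‖ := by rw [sub_sub_cancel]
        _ ≤ ‖H‖ + ‖H - A‖ := norm_sub_le _ _
    linarith
  -- bound on the middle term
  have b2 : ‖A (sbar - sref) + lam • (sbar - sref)‖
      ≤ (MH + (η / 8) * lam + lam) * ‖sbar - sref‖ := by
    calc ‖A (sbar - sref) + lam • (sbar - sref)‖
        ≤ ‖A (sbar - sref)‖ + ‖lam • (sbar - sref)‖ := norm_add_le _ _
      _ ≤ ‖A‖ * ‖sbar - sref‖ + |lam| * ‖sbar - sref‖ := by
          gcongr
          · exact A.le_opNorm _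
          · rw [norm_smul]; simp
      _ ≤ (MH + (η / 8) * lam + lam) * ‖sbar - sref‖ := by
          rw [abs_of_pos hlam]
          have hd0 : (0:ℝ) ≤ ‖sbar - sref‖ := norm_nonneg _
          nlinarith
  have b2' : ‖A (sbar - sref) + lam • (sbar - sref)‖
      ≤ (MH + (η / 8) * lam + lam) * ((η / 8) * (lam / (MH + lam)) * ‖sbar‖) := by
    refine le_trans b2 ?_
    gcongr
  have tri : ‖(H - A) sbar + (A (sbar - sref) + lam • (sbar - sref)) + (g - gbar)‖
      ≤ ‖(H - A) sbar‖ + ‖A (sbar - sref) + lam • (sbar - sref)‖ + ‖g - gbar‖ :=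
    norm_add₃_le
  exact le_trans tri
    (stmt13_aux MH lam η ‖sbar‖ _ _ _ hMH0 hlam hη0 hη1 hs0 b1 b2' h2)
end

section
/- Let f : ℝ^d → ℝ be convex and twice continuously differentiable with L₂-Lipschitz Hessian. Let x, s ∈ ℝ^d, λ > 0, and η ∈ (0, 5/6). If ‖(∇²f(x) + λI)s + ∇f(x)‖ ≤ η·λ·‖s‖ and L₂‖s‖ ≤ λ, then f(x + s) ≤ f(x) − (1 − η − 1/6)·λ·‖s‖². -/
open InnerProductSpace

/-- If `φ` is monotone and has derivative `a` at `t`, then `0 ≤ a`. -/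
lemma monotone_hasDerivAt_nonneg {φ : ℝ → ℝ} {a t : ℝ}
    (hmono : Monotone φ) (h : HasDerivAt φ a t) : 0 ≤ a := by
  have hslope := hasDerivAt_iff_tendsto_slope.mp h
  have h' : Filter.Tendsto (slope φ t) (nhdsWithin t (Set.Ioi t)) (nhds a) :=
    hslope.mono_left (nhdsWithin_mono t (by intro y hy; exact ne_of_gt hy))
  refine ge_of_tendsto h' ?_
  filter_upwards [self_mem_nhdsWithin] with y hy
  have hy' : t < y := hy
  have h1 : 0 ≤ φ y - φ t := sub_nonneg.mpr (hmono hy'.le)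
  have hpos : 0 < y - t := sub_pos.mpr hy'
  simpa [slope_def_field, div_eq_mul_inv] using div_nonneg h1 hpos.le

/-- one-step descent for the inexact regularized Newton step.
For convex `f` with `L₂`-Lipschitz Hessian, if the inexact Newton residual
condition and `L₂‖s‖ ≤ λ` hold with `η ∈ (0, 5/6)`, then
`f(x+s) ≤ f(x) − (1 − η − 1/6)·λ·‖s‖²`. -/
theorem stmt14 {d : ℕ} (f : EuclideanSpace ℝ (Fin d) → ℝ) (L₂ : ℝ)
    (hconv : ConvexOn ℝ Set.univ f)
    (hf : ContDiff ℝ 2 f)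
    (hLip : ∀ x y : EuclideanSpace ℝ (Fin d),
      ‖fderiv ℝ (gradient f) x - fderiv ℝ (gradient f) y‖ ≤ L₂ * ‖x - y‖)
    (x s : EuclideanSpace ℝ (Fin d)) (lam η : ℝ)
    (hlam : 0 < lam) (hη0 : 0 < η) (hη1 : η < 5 / 6)
    (hres : ‖fderiv ℝ (gradient f) x s + lam • s + gradient f x‖ ≤ η * lam * ‖s‖)
    (hstep : L₂ * ‖s‖ ≤ lam) :
    f (x + s) ≤ f x - (1 - η - 1 / 6) * lam * ‖s‖ ^ 2 := by
  -- differentiability facts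
  have hfd : Differentiable ℝ f := hf.differentiable (by norm_num)
  have hgradCD : ContDiff ℝ 1 (gradient f) := by
    have h1 : ContDiff ℝ 1 (fderiv ℝ f) := hf.fderiv_right (by norm_num)
    exact ((toDual ℝ (EuclideanSpace ℝ (Fin d))).symm.toContinuousLinearEquiv.toContinuousLinearMap.contDiff).comp h1
  have hgradD : Differentiable ℝ (gradient f) := hgradCD.differentiable (by norm_num)
  -- the path and its derivative
  have hpath : ∀ t : ℝ, HasDerivAt (fun t : ℝ => x + t • s) s t := by
    intro t
    simpa using ((hasDerivAt_id t).smul_const s).const_add x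
  set g : ℝ → ℝ := fun t => f (x + t • s) with hg_def
  set g1 : ℝ → ℝ := fun t => (inner ℝ s (gradient f (x + t • s)) : ℝ) with hg1_def
  set g2 : ℝ → ℝ := fun t => (inner ℝ s ((fderiv ℝ (gradient f) (x + t • s)) s) : ℝ) with hg2_def
  -- derivative of g is g1
  have hg : ∀ t : ℝ, HasDerivAt g (g1 t) t := by
    intro t
    have h1 : HasGradientAt f (gradient f (x + t • s)) (x + t • s) :=
      (hfd (x + t • s)).hasGradientAt
    have h2 := h1.hasFDerivAt.comp_hasDerivAt t (hpath t)
    have h3 : (toDual ℝ (EuclideanSpace ℝ (Fin d))) (gradient f (x + t • s)) s = g1 t := by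
      rw [toDual_apply_apply]
      exact real_inner_comm _ _
    rw [h3] at h2
    exact h2
  -- derivative of g1 is g2
  have hg1 : ∀ t : ℝ, HasDerivAt g1 (g2 t) t := by
    intro t
    have h1 : HasFDerivAt (gradient f)
        (fderiv ℝ (gradient f) (x + t • s)) (x + t • s) :=
      (hgradD (x + t • s)).hasFDerivAt
    have h2 : HasDerivAt (fun u : ℝ => gradient f (x + u • s))
        ((fderiv ℝ (gradient f) (x + t • s)) s) t :=
      by have := h1.comp_hasDerivAt t (hpath t); exact this
    have h3 := ((innerSL ℝ s).hasFDerivAt.comp_hasDerivAt t h2)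
    exact h3
  -- g is convex
  have hgconv : ConvexOn ℝ Set.univ g := by
    have h := hconv.comp_affineMap (AffineMap.lineMap x (x + s))
    have heq : (f ∘ (AffineMap.lineMap x (x + s))) = g := by
      funext t
      simp [hg_def, AffineMap.lineMap_apply, add_sub_cancel_left, add_comm]
    rw [heq, Set.preimage_univ] at h
    exact h
  -- g1 is monotone (derivative of a convex function)
  have hg1mono : Monotone g1 := by
    have hmono := hgconv.monotoneOn_deriv (fun t _ => (hg t).differentiableAt)
    intro a b hab
    have := hmono (Set.mem_univ a) (Set.mem_univ b) hab
    simpa [(hg a).deriv, (hg b).deriv] using this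
  -- nonnegativity of the Hessian quadratic form
  have hg2nonneg : 0 ≤ g2 0 := monotone_hasDerivAt_nonneg hg1mono (hg1 0)
  -- Lipschitz bound on g2
  set C : ℝ := L₂ * ‖s‖ ^ 3 with hC_def
  have hg2lip : ∀ t : ℝ, 0 ≤ t → g2 t - g2 0 ≤ C * t := by
    intro t ht
    have hdiff : g2 t - g2 0 =
        (inner ℝ s (((fderiv ℝ (gradient f) (x + t • s)) - (fderiv ℝ (gradient f) (x + (0:ℝ) • s))) s) : ℝ) := by
      simp [hg2_def, ContinuousLinearMap.sub_apply, inner_sub_right]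
    have hbound : (inner ℝ s (((fderiv ℝ (gradient f) (x + t • s)) - (fderiv ℝ (gradient f) (x + (0:ℝ) • s))) s) : ℝ)
        ≤ ‖s‖ * (‖(fderiv ℝ (gradient f) (x + t • s)) - (fderiv ℝ (gradient f) (x + (0:ℝ) • s))‖ * ‖s‖) := by
      calc (inner ℝ s (((fderiv ℝ (gradient f) (x + t • s)) - (fderiv ℝ (gradient f) (x + (0:ℝ) • s))) s) : ℝ)
          ≤ ‖s‖ * ‖((fderiv ℝ (gradient f) (x + t • s)) - (fderiv ℝ (gradient f) (x + (0:ℝ) • s))) s‖ :=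
            real_inner_le_norm _ _
        _ ≤ ‖s‖ * (‖(fderiv ℝ (gradient f) (x + t • s)) - (fderiv ℝ (gradient f) (x + (0:ℝ) • s))‖ * ‖s‖) := by
            gcongr
            exact ContinuousLinearMap.le_opNorm _ _
    have hlipval : ‖(fderiv ℝ (gradient f) (x + t • s)) - (fderiv ℝ (gradient f) (x + (0:ℝ) • s))‖
        ≤ L₂ * (t * ‖s‖) := by
      have h := hLip (x + t • s) (x + (0:ℝ) • s)
      have heq : ‖(x + t • s) - (x + (0:ℝ) • s)‖ = t * ‖s‖ := by
        simp [norm_smul, abs_of_nonneg ht]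
      rw [heq] at h
      exact h
    rw [hdiff]
    calc _ ≤ ‖s‖ * (‖(fderiv ℝ (gradient f) (x + t • s)) - (fderiv ℝ (gradient f) (x + (0:ℝ) • s))‖ * ‖s‖) := hbound
      _ ≤ ‖s‖ * ((L₂ * (t * ‖s‖)) * ‖s‖) := by gcongr
      _ = C * t := by rw [hC_def]; ring
  -- Taylor-type bound: g 1 ≤ g 0 + g1 0 + g2 0 / 2 + C / 6
  have key : g 1 ≤ g 0 + g1 0 + g2 0 / 2 + C / 6 := by
    set ψ : ℝ → ℝ := fun t => g t - g 0 - t * g1 0 - t ^ 2 / 2 * g2 0 - C * t ^ 3 / 6 with hψ_def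
    set ψ' : ℝ → ℝ := fun t => g1 t - g1 0 - t * g2 0 - C * t ^ 2 / 2 with hψ'_def
    have hdψ : ∀ t : ℝ, HasDerivAt ψ (ψ' t) t := by
      intro t
      have hA : HasDerivAt (fun u : ℝ => u * g1 0) (g1 0) t := by
        simpa using (hasDerivAt_id t).mul_const (g1 0)
      have hB : HasDerivAt (fun u : ℝ => u ^ 2 / 2 * g2 0) (t * g2 0) t := by
        have h := ((hasDerivAt_pow 2 t).div_const 2).mul_const (g2 0)
        refine h.congr_deriv ?_
        push_cast
        ring
      have hCd : HasDerivAt (fun u : ℝ => C * u ^ 3 / 6) (C * t ^ 2 / 2) t := by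
        have h := ((hasDerivAt_pow 3 t).const_mul C).div_const 6
        refine h.congr_deriv ?_
        push_cast
        ring
      have := ((((hg t).sub_const (g 0)).sub hA).sub hB).sub hCd
      exact this
    have hdψ' : ∀ t : ℝ, HasDerivAt ψ' (g2 t - g2 0 - C * t) t := by
      intro t
      have hA : HasDerivAt (fun u : ℝ => u * g2 0) (g2 0) t := by
        simpa using (hasDerivAt_id t).mul_const (g2 0)
      have hB : HasDerivAt (fun u : ℝ => C * u ^ 2 / 2) (C * t) t := by
        have h := ((hasDerivAt_pow 2 t).const_mul C).div_const 2
        refine h.congr_deriv ?_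
        push_cast
        ring
      exact (((hg1 t).sub_const (g1 0)).sub hA).sub hB
    -- ψ' is antitone on [0, ∞)
    have hψ'anti : AntitoneOn ψ' (Set.Ici (0:ℝ)) := by
      refine antitoneOn_of_deriv_nonpos (convex_Ici 0) ?_ ?_ ?_
      · exact fun t _ => (hdψ' t).differentiableAt.continuousAt.continuousWithinAt
      · intro t ht
        exact (hdψ' t).differentiableAt.differentiableWithinAt
      · intro t ht
        rw [interior_Ici] at ht
        rw [(hdψ' t).deriv]
        have := hg2lip t (le_of_lt ht)
        linarith
    have hψ'0 : ψ' 0 = 0 := by simp [hψ'_def]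
    have hψ'nonpos : ∀ t : ℝ, 0 ≤ t → ψ' t ≤ 0 := by
      intro t ht
      have := hψ'anti (Set.self_mem_Ici) (Set.mem_Ici.mpr ht) ht
      linarith [hψ'0]
    -- ψ is antitone on [0, ∞)
    have hψanti : AntitoneOn ψ (Set.Ici (0:ℝ)) := by
      refine antitoneOn_of_deriv_nonpos (convex_Ici 0) ?_ ?_ ?_
      · exact fun t _ => (hdψ t).differentiableAt.continuousAt.continuousWithinAt
      · intro t ht
        exact (hdψ t).differentiableAt.differentiableWithinAt
      · intro t ht
        rw [interior_Ici] at ht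
        rw [(hdψ t).deriv]
        exact hψ'nonpos t (le_of_lt ht)
    have hψ0 : ψ 0 = 0 := by simp [hψ_def]
    have := hψanti (Set.self_mem_Ici) (Set.mem_Ici.mpr (by norm_num : (0:ℝ) ≤ 1)) (by norm_num)
    rw [hψ0] at this
    simp only [hψ_def] at this
    linarith
  -- identify endpoints
  have hg0 : g 0 = f x := by simp [hg_def]
  have hgone : g 1 = f (x + s) := by simp [hg_def]
  -- the residual bound
  have hsum : g2 0 + lam * ‖s‖ ^ 2 + g1 0 ≤ η * lam * ‖s‖ ^ 2 := by
    have h1 : (inner ℝ s (fderiv ℝ (gradient f) x s + lam • s + gradient f x) : ℝ)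
        = g2 0 + lam * ‖s‖ ^ 2 + g1 0 := by
      have hx0 : x + (0:ℝ) • s = x := by simp
      simp only [hg1_def, hg2_def, hx0]
      rw [inner_add_right, inner_add_right, real_inner_smul_right,
        real_inner_self_eq_norm_sq]
    have h2 : (inner ℝ s (fderiv ℝ (gradient f) x s + lam • s + gradient f x) : ℝ)
        ≤ ‖s‖ * (η * lam * ‖s‖) := by
      calc (inner ℝ s (fderiv ℝ (gradient f) x s + lam • s + gradient f x) : ℝ)
          ≤ ‖s‖ * ‖fderiv ℝ (gradient f) x s + lam • s + gradient f x‖ :=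
            real_inner_le_norm _ _
        _ ≤ ‖s‖ * (η * lam * ‖s‖) := by
            exact mul_le_mul_of_nonneg_left hres (norm_nonneg s)
    rw [h1] at h2
    calc g2 0 + lam * ‖s‖ ^ 2 + g1 0 ≤ ‖s‖ * (η * lam * ‖s‖) := h2
      _ = η * lam * ‖s‖ ^ 2 := by ring
  -- bound on C
  have hCle : C ≤ lam * ‖s‖ ^ 2 := by
    rw [hC_def]
    nlinarith [sq_nonneg ‖s‖, norm_nonneg s]
  -- put it all together
  rw [← hgone, ← hg0]
  have hfin : g 1 ≤ g 0 + g1 0 + g2 0 / 2 + C / 6 := key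
  nlinarith [hg2nonneg, hsum, hCle, hfin]
end

section
/- Let f : ℝ^d → ℝ be twice continuously differentiable with L₂-Lipschitz Hessian. Let x, s ∈ ℝ^d, λ > 0, and η ∈ (0, 5/6). If ‖(∇²f(x) + λI)s + ∇f(x)‖ ≤ η·λ·‖s‖ and L₂‖s‖ ≤ λ, then ‖∇f(x + s)‖ ≤ (1 + η + 1/2)·λ·‖s‖. -/
/-- new gradient bound after an inexact regularized Newton step.
For `f` with `L₂`-Lipschitz Hessian, if the inexact Newton residual condition and
`L₂‖s‖ ≤ λ` hold with `η ∈ (0, 5/6)`, then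
`‖∇f(x+s)‖ ≤ (1 + η + 1/2)·λ·‖s‖`. -/
theorem stmt15 {d : ℕ} (f : EuclideanSpace ℝ (Fin d) → ℝ) (L₂ : ℝ)
    (hf : ContDiff ℝ 2 f)
    (hLip : ∀ x y : EuclideanSpace ℝ (Fin d),
      ‖fderiv ℝ (gradient f) x - fderiv ℝ (gradient f) y‖ ≤ L₂ * ‖x - y‖)
    (x s : EuclideanSpace ℝ (Fin d)) (lam η : ℝ)
    (hlam : 0 < lam) (hη0 : 0 < η) (hη1 : η < 5 / 6)
    (hres : ‖fderiv ℝ (gradient f) x s + lam • s + gradient f x‖ ≤ η * lam * ‖s‖)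
    (hstep : L₂ * ‖s‖ ≤ lam) :
    ‖gradient f (x + s)‖ ≤ (1 + η + 1 / 2) * lam * ‖s‖ := by
  set g := gradient f with hg
  have hdiff : Differentiable ℝ g := by
    have h1 : ContDiff ℝ 1 (fderiv ℝ f) := hf.fderiv_right (by norm_num)
    have h2 : Differentiable ℝ (fderiv ℝ f) := h1.differentiable (by norm_num)
    exact fun y => ((InnerProductSpace.toDual ℝ
      (EuclideanSpace ℝ (Fin d))).symm.toContinuousLinearEquiv.differentiableAt).comp y (h2 y)
  -- Taylor bound
  have key : ‖g (x + s) - g x - fderiv ℝ g x s‖ ≤ L₂ / 2 * ‖s‖ ^ 2 := by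
    set φ : ℝ → EuclideanSpace ℝ (Fin d) :=
      fun t => g (x + t • s) - g x - t • fderiv ℝ g x s with hφ
    have hφ' : ∀ t : ℝ, HasDerivAt φ (fderiv ℝ g (x + t • s) s - fderiv ℝ g x s) t := by
      intro t
      have hline : HasDerivAt (fun t : ℝ => x + t • s) s t := by
        simpa using ((hasDerivAt_id t).smul_const s).const_add x
      have h1 : HasDerivAt (fun t : ℝ => g (x + t • s)) (fderiv ℝ g (x + t • s) s) t :=
        by have := (hdiff (x + t • s)).hasFDerivAt.comp_hasDerivAt t hline; exact this
      have h2 : HasDerivAt (fun t : ℝ => t • fderiv ℝ g x s) (fderiv ℝ g x s) t := by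
        simpa using (hasDerivAt_id t).smul_const (fderiv ℝ g x s)
      exact (h1.sub_const (g x)).sub h2
    have hB : ∀ t : ℝ, HasDerivAt (fun t => L₂ / 2 * ‖s‖ ^ 2 * t ^ 2)
        (L₂ * ‖s‖ ^ 2 * t) t := by
      intro t
      have := (hasDerivAt_pow 2 t).const_mul (L₂ / 2 * ‖s‖ ^ 2)
      refine this.congr_deriv ?_
      norm_num
      ring
    have bound : ∀ t ∈ Set.Ico (0 : ℝ) 1,
        ‖fderiv ℝ g (x + t • s) s - fderiv ℝ g x s‖ ≤ L₂ * ‖s‖ ^ 2 * t := by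
      intro t ht
      have h1 : ‖fderiv ℝ g (x + t • s) s - fderiv ℝ g x s‖
          ≤ ‖fderiv ℝ g (x + t • s) - fderiv ℝ g x‖ * ‖s‖ := by
        rw [← ContinuousLinearMap.sub_apply]
        exact ContinuousLinearMap.le_opNorm _ _
      have h2 : ‖fderiv ℝ g (x + t • s) - fderiv ℝ g x‖ ≤ L₂ * (t * ‖s‖) := by
        have h3 := hLip (x + t • s) x
        rwa [add_sub_cancel_left, norm_smul, Real.norm_eq_abs,
          abs_of_nonneg ht.1] at h3
      calc ‖fderiv ℝ g (x + t • s) s - fderiv ℝ g x s‖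
          ≤ L₂ * (t * ‖s‖) * ‖s‖ :=
            h1.trans (mul_le_mul_of_nonneg_right h2 (norm_nonneg s))
        _ = L₂ * ‖s‖ ^ 2 * t := by ring
    have main := image_norm_le_of_norm_deriv_right_le_deriv_boundary
      (f := φ) (a := 0) (b := 1)
      (fun t _ => (hφ' t).continuousAt.continuousWithinAt)
      (fun t _ => (hφ' t).hasDerivWithinAt)
      (by simp [hφ]) hB bound
    have h1 := main (Set.right_mem_Icc.2 zero_le_one)
    simpa [hφ] using h1
  -- decomposition
  have hdecomp : g (x + s) = (g (x + s) - g x - fderiv ℝ g x s)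
      + (fderiv ℝ g x s + lam • s + g x) - lam • s := by abel
  have hnorm : ‖g (x + s)‖ ≤ L₂ / 2 * ‖s‖ ^ 2 + η * lam * ‖s‖ + lam * ‖s‖ := by
    calc ‖g (x + s)‖
        ≤ ‖(g (x + s) - g x - fderiv ℝ g x s) + (fderiv ℝ g x s + lam • s + g x)‖
            + ‖lam • s‖ := by conv_lhs => rw [hdecomp]
                              exact norm_sub_le _ _
      _ ≤ ‖g (x + s) - g x - fderiv ℝ g x s‖ + ‖fderiv ℝ g x s + lam • s + g x‖
            + ‖lam • s‖ := by gcongr; exact norm_add_le _ _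
      _ ≤ L₂ / 2 * ‖s‖ ^ 2 + η * lam * ‖s‖ + lam * ‖s‖ := by
          have h2 : ‖lam • s‖ = lam * ‖s‖ := by
            rw [norm_smul, Real.norm_eq_abs, abs_of_pos hlam]
          rw [h2]; gcongr
  have hfin : L₂ / 2 * ‖s‖ ^ 2 + η * lam * ‖s‖ + lam * ‖s‖
      ≤ (1 + η + 1 / 2) * lam * ‖s‖ := by
    nlinarith [norm_nonneg s, mul_le_mul_of_nonneg_right hstep (norm_nonneg s)]
  exact hnorm.trans hfin
end

section
/- Let ν > 0 and let (Φ_k)_{k≥0} be a sequence of nonnegative reals satisfying Φ_{k+1} ≤ Φ_k − ν·Φ_k^{3/2} for all k ≥ 0. Then Φ_k ≤ 4/(ν²(k+2)²) for all k ≥ 0. -/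
lemma rpow32 (x : ℝ) (hx : 0 ≤ x) : x ^ ((3 : ℝ) / 2) = Real.sqrt x ^ 3 := by
  rw [show ((3 : ℝ) / 2) = (1 / 2) * 3 by norm_num, Real.rpow_mul hx,
    ← Real.sqrt_eq_rpow, show (3 : ℝ) = ((3 : ℕ) : ℝ) by norm_num,
    Real.rpow_natCast]

/-- solving the 3/2-power recursion.
If `Φ_{k+1} ≤ Φ_k − ν·Φ_k^{3/2}` with `Φ_k ≥ 0`, then `Φ_k ≤ 4/(ν²(k+2)²)`. -/
theorem stmt16 (ν : ℝ) (hν : 0 < ν) (Φ : ℕ → ℝ)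
    (hpos : ∀ k, 0 ≤ Φ k)
    (hrec : ∀ k, Φ (k + 1) ≤ Φ k - ν * Φ k ^ ((3 : ℝ) / 2)) :
    ∀ k, Φ k ≤ 4 / (ν ^ 2 * ((k : ℝ) + 2) ^ 2) := by
  intro k
  induction k with
  | zero =>
    set s := Real.sqrt (Φ 0) with hs
    have hsq : Φ 0 = s ^ 2 := (Real.sq_sqrt (hpos 0)).symm
    have hr := hrec 0
    rw [rpow32 _ (hpos 0), ← hs] at hr
    have h1 := hpos 1
    have hs0 : 0 ≤ s := Real.sqrt_nonneg _
    have key : ν * s ^ 3 ≤ s ^ 2 := by nlinarith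
    have hνs : ν * s ≤ 1 := by
      by_contra h
      push_neg at h
      have hspos : 0 < s := by nlinarith
      nlinarith [mul_lt_mul_of_pos_right h (by positivity : (0:ℝ) < s ^ 2)]
    rw [hsq, le_div_iff₀ (by positivity)]
    push_cast
    nlinarith [mul_nonneg hν.le hs0]
  | succ k ih =>
    set s := Real.sqrt (Φ k) with hs
    have hsq : Φ k = s ^ 2 := (Real.sq_sqrt (hpos k)).symm
    have hr := hrec k
    rw [rpow32 _ (hpos k), ← hs] at hr
    have hs0 : 0 ≤ s := Real.sqrt_nonneg _
    set m : ℝ := (k : ℝ) + 2 with hm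
    have hm2 : 2 ≤ m := by
      have : (0:ℝ) ≤ (k:ℝ) := Nat.cast_nonneg k
      linarith
    have hbound : s ^ 2 * (ν ^ 2 * m ^ 2) ≤ 4 := by
      rw [← le_div_iff₀ (by positivity), ← hsq]; exact ih
    have hms0 : 0 ≤ ν * s * m := by positivity
    have hms : ν * s * m ≤ 2 := by nlinarith
    have goal2 : Φ (k + 1) ≤ s ^ 2 - ν * s ^ 3 := by
      rw [hsq] at hr; exact hr
    have hcast : ((k + 1 : ℕ) : ℝ) + 2 = m + 1 := by rw [hm]; push_cast; ring
    rw [hcast, le_div_iff₀ (by positivity)]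
    have hts0 : 0 ≤ ν * s := by positivity
    have key2 : (s ^ 2 - ν * s ^ 3) * (ν ^ 2 * (m + 1) ^ 2) ≤ 4 := by
      have hpoly : ∀ t : ℝ, 0 ≤ t → t * m ≤ 2 → (t^2 - t^3) * (m+1)^2 ≤ 4 := by
        intro t ht h
        nlinarith [sq_nonneg (t*m - 2), sq_nonneg (t*(m+1) - 2),
          mul_nonneg ht (sub_nonneg.2 h),
          mul_nonneg (sub_nonneg.2 hm2) (sub_nonneg.2 h),
          sq_nonneg (t*m + 2 - 2*t),
          mul_nonneg (mul_nonneg ht ht) (sub_nonneg.2 h), sq_nonneg t,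
          sq_nonneg (3*t - 2)]
      have h5 := hpoly (ν * s) hts0 (by linarith)
      have heq : (s ^ 2 - ν * s ^ 3) * (ν ^ 2 * (m + 1) ^ 2)
          = ((ν * s) ^ 2 - (ν * s) ^ 3) * (m + 1) ^ 2 := by ring
      rw [heq]; exact h5
    have hC : (0:ℝ) ≤ ν ^ 2 * (m + 1) ^ 2 := by positivity
    calc Φ (k + 1) * (ν ^ 2 * (m + 1) ^ 2)
        ≤ (s ^ 2 - ν * s ^ 3) * (ν ^ 2 * (m + 1) ^ 2) :=
          mul_le_mul_of_nonneg_right goal2 hC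
      _ ≤ 4 := key2
end

section
/- Let p > 2, b ≥ 0, and 0 ≤ q < 1. Let (u_k)_{k≥0} and (a_k)_{k≥0} be sequences of nonnegative reals such that u_{k+1} ≤ a_k(u_k + b) for all k ≥ 0, a_k ≤ q for all k ≥ 0, and a_k ≤ (k+2)^{−p} for all k ≥ 0. Then there exists C > 0 such that u_k ≤ C/(k+2)^{p−1} for all k ≥ 0; one may take C := 2^{p−1}(u_max + b) with u_max := u₀ + qb/(1−q). -/
/-- comparison lemma: polynomial decay under a scheduled recursion.
If `u_{k+1} ≤ a_k(u_k + b)` with `a_k ≤ q < 1` and `a_k ≤ (k+2)^{−p}`, `p > 2`,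
then `u_k ≤ C/(k+2)^{p−1}` for some `C > 0`; one may take
`C = 2^{p−1}(u_max + b)` with `u_max = u₀ + qb/(1−q)`. -/
theorem stmt17 (p b q : ℝ) (hp : 2 < p) (hb : 0 ≤ b) (hq0 : 0 ≤ q) (hq1 : q < 1)
    (u a : ℕ → ℝ) (hu : ∀ k, 0 ≤ u k) (ha : ∀ k, 0 ≤ a k)
    (hrec : ∀ k, u (k + 1) ≤ a k * (u k + b))
    (haq : ∀ k, a k ≤ q)
    (hap : ∀ k, a k ≤ ((k : ℝ) + 2) ^ (-p)) :
    (∃ C > 0, ∀ k, u k ≤ C / ((k : ℝ) + 2) ^ (p - 1)) ∧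
      ∀ k, u k ≤ (2 : ℝ) ^ (p - 1) * ((u 0 + q * b / (1 - q)) + b)
        / ((k : ℝ) + 2) ^ (p - 1) := by
  have h1q : 0 < 1 - q := by linarith
  obtain ⟨M, hM⟩ : ∃ M, M = u 0 + q * b / (1 - q) := ⟨_, rfl⟩
  rw [← hM]
  have hMnn : 0 ≤ M := by
    have h1 : 0 ≤ q * b / (1 - q) := by positivity
    have h2 := hu 0
    rw [hM]; linarith
  have hbound : ∀ k, u k ≤ M := by
    intro k
    induction k with
    | zero =>
      have h1 : 0 ≤ q * b / (1 - q) := by positivity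
      rw [hM]; linarith
    | succ n ih =>
      have h2 : a n * (u n + b) ≤ q * (M + b) :=
        mul_le_mul (haq n) (by linarith) (by linarith [hu n]) hq0
      have hdm : q * b / (1 - q) * (1 - q) = q * b :=
        div_mul_cancel₀ _ (ne_of_gt h1q)
      have h3 : q * (M + b) ≤ M := by nlinarith [hu 0, hM, hdm]
      linarith [hrec n]
  have h2pos : (0:ℝ) < (2:ℝ) ^ (p - 1) := Real.rpow_pos_of_pos (by norm_num) _
  have hkey : ∀ k : ℕ, u k ≤ (2:ℝ) ^ (p - 1) * (M + b) / ((k : ℝ) + 2) ^ (p - 1) := by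
    intro k
    match k with
    | 0 =>
      have h0 : ((0:ℕ):ℝ) + 2 = 2 := by norm_num
      rw [h0, mul_comm, mul_div_assoc, div_self (ne_of_gt h2pos), mul_one]
      linarith [hbound 0]
    | (n+1) =>
      set x : ℝ := (n:ℝ) + 2 with hx
      set y : ℝ := (n:ℝ) + 3 with hy
      have hxpos : (0:ℝ) < x := by positivity
      have hx1 : (1:ℝ) ≤ x := by rw [hx]; have : (0:ℝ) ≤ (n:ℝ) := Nat.cast_nonneg n; linarith
      have hypos : (0:ℝ) < y := by positivity
      have hy2x : y ≤ 2 * x := by rw [hx, hy]; have : (0:ℝ) ≤ (n:ℝ) := Nat.cast_nonneg n; linarith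
      have hcast : ((n+1:ℕ):ℝ) + 2 = y := by rw [hy]; push_cast; ring
      rw [hcast]
      have hystep : y ^ (p - 1) ≤ 2 ^ (p - 1) * x ^ p := by
        calc y ^ (p - 1) ≤ (2 * x) ^ (p - 1) :=
              Real.rpow_le_rpow (le_of_lt hypos) hy2x (by linarith)
          _ = 2 ^ (p - 1) * x ^ (p - 1) := Real.mul_rpow (by norm_num) (le_of_lt hxpos)
          _ ≤ 2 ^ (p - 1) * x ^ p :=
              mul_le_mul_of_nonneg_left
                (Real.rpow_le_rpow_of_exponent_le hx1 (by linarith)) (le_of_lt h2pos)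
      have hxneg : x ^ (-p) ≤ 2 ^ (p - 1) / y ^ (p - 1) := by
        rw [Real.rpow_neg (le_of_lt hxpos), inv_eq_one_div,
          div_le_div_iff₀ (Real.rpow_pos_of_pos hxpos p) (Real.rpow_pos_of_pos hypos _)]
        linarith [hystep]
      have h4 : u (n + 1) ≤ x ^ (-p) * (M + b) := by
        have h5 : a n * (u n + b) ≤ x ^ (-p) * (M + b) :=
          mul_le_mul (hap n) (by linarith [hbound n]) (by linarith [hu n])
            (Real.rpow_nonneg (le_of_lt hxpos) _)
        linarith [hrec n]
      calc u (n + 1) ≤ x ^ (-p) * (M + b) := h4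
        _ ≤ (2 ^ (p - 1) / y ^ (p - 1)) * (M + b) :=
            mul_le_mul_of_nonneg_right hxneg (by linarith)
        _ = 2 ^ (p - 1) * (M + b) / y ^ (p - 1) := by ring
  refine ⟨⟨(2:ℝ) ^ (p - 1) * (M + b) + 1, by positivity, fun k => ?_⟩, hkey⟩
  have hden : (0:ℝ) < ((k : ℝ) + 2) ^ (p - 1) := Real.rpow_pos_of_pos (by positivity) _
  calc u k ≤ (2:ℝ) ^ (p - 1) * (M + b) / ((k : ℝ) + 2) ^ (p - 1) := hkey k
    _ ≤ ((2:ℝ) ^ (p - 1) * (M + b) + 1) / ((k : ℝ) + 2) ^ (p - 1) :=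
        (div_le_div_iff_of_pos_right hden).mpr (by linarith)
end

section
/- Let f : ℝ^d → ℝ be convex and differentiable with a minimizer x⋆, and let D > 0, C > 0, λ > 0, and η ∈ (0, 1/12]. Let x ∈ ℝ^d with ‖x − x⋆‖ ≤ D and g := ∇f(x) ≠ 0, let s ∈ ℝ^d, and set x₊ := x + s. Assume: f(x₊) ≤ f(x) − (1 − η − 1/6)·λ·‖s‖²; ‖∇f(x₊)‖ ≤ (1 + η + 1/2)·λ·‖s‖; ‖∇f(x₊)‖ ≥ (1/4)·‖g‖; and λ ≤ C·√‖g‖. Then, with ν := (1 − η − 1/6)/(16·(1 + η + 1/2)²·C·D^{3/2}), one has f(x) − f(x₊) ≥ ν·(f(x) − f(x⋆))^{3/2}. -/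
lemma grad_ineq {d : ℕ} (f : EuclideanSpace ℝ (Fin d) → ℝ)
    (hconv : ConvexOn ℝ Set.univ f) (hdiff : Differentiable ℝ f)
    (x y : EuclideanSpace ℝ (Fin d)) :
    f x + (inner ℝ (gradient f x) (y - x) : ℝ) ≤ f y := by
  set h : ℝ → ℝ := fun t => f (x + t • (y - x)) with hh
  have hline : HasDerivAt (fun t : ℝ => x + t • (y - x)) (y - x) 0 := by
    simpa using ((hasDerivAt_id (0 : ℝ)).smul_const (y - x)).const_add x
  have hgrad : HasGradientAt f (gradient f x) x := (hdiff x).hasGradientAt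
  have hfd := hasGradientAt_iff_hasFDerivAt.mp hgrad
  have hfd' : HasFDerivAt f ((InnerProductSpace.toDual ℝ _) (gradient f x))
      (x + (0 : ℝ) • (y - x)) := by simpa using hfd
  have hcomp : HasDerivAt h ((inner ℝ (gradient f x) (y - x) : ℝ)) 0 := by
    simpa [hh, Function.comp_def, InnerProductSpace.toDual_apply_apply] using hfd'.comp_hasDerivAt 0 hline
  have hhc : ConvexOn ℝ Set.univ h := by
    have := hconv.comp_affineMap (AffineMap.lineMap x y)
    have he : h = f ∘ (AffineMap.lineMap x y) := by
      funext t
      simp [hh, AffineMap.lineMap_apply, add_comm]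
    rw [he]
    simpa using this
  have := hhc.le_slope_of_hasDerivAt (Set.mem_univ (0:ℝ)) (Set.mem_univ (1:ℝ))
    one_pos hcomp
  have h2 : slope h 0 1 = f y - f x := by simp [slope_def_field, hh]
  rw [h2] at this
  linarith

/-- steady-step sharp decrease.
Under one-step descent, the new-gradient bound, the steady-step condition
`‖∇f(x₊)‖ ≥ (1/4)‖g‖`, and `λ ≤ C√‖g‖`, with
`ν = (1 − η − 1/6)/(16·(1 + η + 1/2)²·C·D^{3/2})` one has
`f(x) − f(x₊) ≥ ν·(f(x) − f(x⋆))^{3/2}`. -/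
theorem stmt18 {d : ℕ} (f : EuclideanSpace ℝ (Fin d) → ℝ)
    (hconv : ConvexOn ℝ Set.univ f)
    (hdiff : Differentiable ℝ f)
    (xstar : EuclideanSpace ℝ (Fin d)) (hmin : ∀ y, f xstar ≤ f y)
    (D C lam η : ℝ) (hD : 0 < D) (hC : 0 < C) (hlam : 0 < lam)
    (hη0 : 0 < η) (hη1 : η ≤ 1 / 12)
    (x s : EuclideanSpace ℝ (Fin d))
    (hx : ‖x - xstar‖ ≤ D)
    (hg : gradient f x ≠ 0)
    (hdes : f (x + s) ≤ f x - (1 - η - 1 / 6) * lam * ‖s‖ ^ 2)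
    (hgb : ‖gradient f (x + s)‖ ≤ (1 + η + 1 / 2) * lam * ‖s‖)
    (hsteady : (1 / 4) * ‖gradient f x‖ ≤ ‖gradient f (x + s)‖)
    (hlamC : lam ≤ C * Real.sqrt ‖gradient f x‖) :
    f x - f (x + s) ≥
      ((1 - η - 1 / 6) / (16 * (1 + η + 1 / 2) ^ 2 * C * D ^ ((3 : ℝ) / 2)))
        * (f x - f xstar) ^ ((3 : ℝ) / 2) := by
  set G : ℝ := ‖gradient f x‖ with hGdef
  set a : ℝ := 1 - η - 1 / 6 with hadef
  set b : ℝ := 1 + η + 1 / 2 with hbdef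
  have ha : 0 < a := by simp only [hadef]; linarith
  have hb : (0:ℝ) < b := by simp only [hbdef]; linarith
  have hG : 0 < G := norm_pos_iff.mpr hg
  -- convexity bound
  have hib : f x - f xstar ≤ G * D := by
    have h1 := grad_ineq f hconv hdiff x xstar
    have h2 : (inner ℝ (gradient f x) (x - xstar) : ℝ)
        = - inner ℝ (gradient f x) (xstar - x) := by
      rw [← inner_neg_right, neg_sub]
    have h3 : (inner ℝ (gradient f x) (x - xstar) : ℝ) ≤ G * ‖x - xstar‖ :=
      real_inner_le_norm _ _
    have h4 : G * ‖x - xstar‖ ≤ G * D := by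
      exact mul_le_mul_of_nonneg_left hx hG.le
    linarith
  have h0 : 0 ≤ f x - f xstar := sub_nonneg.2 (hmin x)
  have key2 : (f x - f xstar) ^ ((3:ℝ)/2) ≤ G ^ ((3:ℝ)/2) * D ^ ((3:ℝ)/2) := by
    calc (f x - f xstar) ^ ((3:ℝ)/2) ≤ (G * D) ^ ((3:ℝ)/2) :=
          Real.rpow_le_rpow h0 hib (by norm_num)
      _ = G ^ ((3:ℝ)/2) * D ^ ((3:ℝ)/2) := Real.mul_rpow hG.le hD.le
  -- lower bound on decrease
  have hs4 : G ≤ 4 * b * lam * ‖s‖ := by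
    have := hsteady.trans hgb; linarith
  have hQ : (0:ℝ) ≤ lam * ‖s‖ ^ 2 := by positivity
  have hGsq : G ^ 2 ≤ 16 * b ^ 2 * lam * (lam * ‖s‖ ^ 2) := by
    nlinarith [hG.le, norm_nonneg s, hb.le, hlam.le]
  have hsg : 0 < Real.sqrt G := Real.sqrt_pos.2 hG
  have hP : Real.sqrt G * G ^ ((3:ℝ)/2) = G ^ 2 := by
    rw [Real.sqrt_eq_rpow, ← Real.rpow_add hG]
    rw [show ((1:ℝ)/2 + 3/2) = ((2:ℕ):ℝ) by norm_num, Real.rpow_natCast]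
  have hPpos : 0 < G ^ ((3:ℝ)/2) := Real.rpow_pos_of_pos hG _
  have key1 : G ^ ((3:ℝ)/2) ≤ 16 * b ^ 2 * C * (lam * ‖s‖ ^ 2) := by
    have e1 : 16 * b ^ 2 * (lam * ‖s‖ ^ 2) * lam
        ≤ 16 * b ^ 2 * (lam * ‖s‖ ^ 2) * (C * Real.sqrt G) :=
      mul_le_mul_of_nonneg_left hlamC (by positivity)
    have e3 : G ^ ((3:ℝ)/2) * Real.sqrt G
        ≤ (16 * b ^ 2 * C * (lam * ‖s‖ ^ 2)) * Real.sqrt G := by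
      calc G ^ ((3:ℝ)/2) * Real.sqrt G = G ^ 2 := by rw [mul_comm]; exact hP
        _ ≤ 16 * b ^ 2 * lam * (lam * ‖s‖ ^ 2) := hGsq
        _ = 16 * b ^ 2 * (lam * ‖s‖ ^ 2) * lam := by ring
        _ ≤ 16 * b ^ 2 * (lam * ‖s‖ ^ 2) * (C * Real.sqrt G) := e1
        _ = (16 * b ^ 2 * C * (lam * ‖s‖ ^ 2)) * Real.sqrt G := by ring
    exact le_of_mul_le_mul_right e3 hsg
  have hdec : a * (lam * ‖s‖ ^ 2) ≤ f x - f (x + s) := by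
    rw [← mul_assoc]; linarith
  have hdec2 : a * G ^ ((3:ℝ)/2) / (16 * b ^ 2 * C) ≤ f x - f (x + s) := by
    rw [div_le_iff₀ (by positivity)]
    calc a * G ^ ((3:ℝ)/2) ≤ a * (16 * b ^ 2 * C * (lam * ‖s‖ ^ 2)) :=
          mul_le_mul_of_nonneg_left key1 ha.le
      _ = a * (lam * ‖s‖ ^ 2) * (16 * b ^ 2 * C) := by ring
      _ ≤ (f x - f (x + s)) * (16 * b ^ 2 * C) :=
          mul_le_mul_of_nonneg_right hdec (by positivity)
  have hDr : 0 < D ^ ((3:ℝ)/2) := Real.rpow_pos_of_pos hD _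
  have hν : 0 ≤ a / (16 * b ^ 2 * C * D ^ ((3:ℝ)/2)) := by positivity
  calc (a / (16 * b ^ 2 * C * D ^ ((3:ℝ)/2))) * (f x - f xstar) ^ ((3:ℝ)/2)
      ≤ (a / (16 * b ^ 2 * C * D ^ ((3:ℝ)/2))) * (G ^ ((3:ℝ)/2) * D ^ ((3:ℝ)/2)) :=
        mul_le_mul_of_nonneg_left key2 hν
    _ = a * G ^ ((3:ℝ)/2) / (16 * b ^ 2 * C) := by
        field_simp
    _ ≤ f x - f (x + s) := hdec2
end
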